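/- arXiv:2206.02010 — 12 statements merged into one kernel-verified Lean document; each statement's English description precedes it below -/
import Mathlib

section
/- There exists a minimizer of the Tikhonov functional: there is u* ∈ D such that T_α^δ(u*) ≤ T_α^δ(u) for all u ∈ D. -/
open Filter Set
open Topology

open Metric NormedSpace in
lemma aux_isCompact_image_closedBall
    {Xt : Type*} [NormedAddCommGroup Xt] [NormedSpace ℝ Xt]
    (Gt : Xt →L[ℝ] Xt) (hGtcompact : IsCompactOperator Gt)
    (G : StrongDual ℝ Xt →L[ℝ] StrongDual ℝ Xt)
    (hGadj : ∀ (φ : StrongDual ℝ Xt) (x : Xt), G φ x = φ (Gt x))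
    (R : ℝ) :
    IsCompact (G '' Metric.closedBall 0 R) := by
  classical
  rcases lt_or_ge R 0 with hR | hR
  · simp [Metric.closedBall_eq_empty.2 hR]
  apply TotallyBounded.isCompact_of_isClosed
  · -- totally bounded
    rw [Metric.totallyBounded_iff]
    intro ε hε
    obtain ⟨K, hKc, hK⟩ := hGtcompact.image_closedBall_subset_compact 1
    set δ := ε / (4 * (R + 1)) with hδdef
    have hδpos : 0 < δ := by positivity
    obtain ⟨t, htfin, htK⟩ := (Metric.totallyBounded_iff.mp hKc.totallyBounded) δ hδpos
    haveI : Fintype ↥t := htfin.fintype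
    set Φ : StrongDual ℝ Xt → (↥t → ℝ) := fun v y => v (y : Xt) with hΦdef
    set B : Set (↥t → ℝ) := Φ '' Metric.closedBall 0 R with hBdef
    have hBtb : TotallyBounded B := by
      apply TotallyBounded.subset ?_ (isCompact_univ_pi
        (fun y : ↥t => isCompact_Icc (a := -(R * ‖(y : Xt)‖)) (b := R * ‖(y : Xt)‖))).totallyBounded
      rintro w ⟨v, hv, rfl⟩
      rw [Set.mem_univ_pi]
      intro y
      rw [Set.mem_Icc, ← abs_le]
      calc |v (y : Xt)| ≤ ‖v‖ * ‖(y : Xt)‖ := v.le_opNorm _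
        _ ≤ R * ‖(y : Xt)‖ := by
            apply mul_le_mul_of_nonneg_right _ (norm_nonneg _)
            simpa [Metric.mem_closedBall, dist_eq_norm] using hv
    obtain ⟨s, hsB, hsfin, hscov⟩ := totallyBounded_iff_subset.mp hBtb
      {p | dist p.1 p.2 < ε / 4} (Metric.dist_mem_uniformity (by positivity))
    set pick : (↥t → ℝ) → StrongDual ℝ Xt := fun w =>
      if h : w ∈ B then h.choose else 0 with hpickdef
    have hpick : ∀ w ∈ s, pick w ∈ Metric.closedBall (0 : StrongDual ℝ Xt) R ∧ Φ (pick w) = w := by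
      intro w hw
      have hwB : w ∈ B := hsB hw
      simp only [hpickdef, dif_pos hwB]
      exact ⟨hwB.choose_spec.1, hwB.choose_spec.2⟩
    refine ⟨(G ∘ pick) '' s, hsfin.image _, ?_⟩
    rintro _ ⟨v, hv, rfl⟩
    have hvB : Φ v ∈ B := ⟨v, hv, rfl⟩
    obtain ⟨w, hws, hwdist⟩ := by
      have := hscov hvB
      simpa using this
    have hvR : ‖v‖ ≤ R := by simpa [Metric.mem_closedBall, dist_eq_norm] using hv
    obtain ⟨hpmem, hpΦ⟩ := hpick w hws
    have hpR : ‖pick w‖ ≤ R := by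
      simpa [Metric.mem_closedBall, dist_eq_norm] using hpmem
    refine Set.mem_iUnion₂.mpr ⟨G (pick w), ⟨w, hws, rfl⟩, ?_⟩
    rw [Metric.mem_ball, dist_eq_norm, ← map_sub]
    have hbound : ‖G (v - pick w)‖ ≤ 3 * ε / 4 := by
      apply ContinuousLinearMap.opNorm_le_of_unit_norm (by positivity)
      intro x hx
      have hxK : Gt x ∈ K := hK ⟨x, by simp [Metric.mem_closedBall, dist_eq_norm, hx], rfl⟩
      obtain ⟨y, hyt, hydist⟩ := by
        have := htK hxK
        simpa using this
      have heval : (G (v - pick w)) x = (v - pick w) (Gt x) := hGadj _ _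
      rw [heval]
      have h1 : |(v - pick w) (Gt x) - (v - pick w) y| ≤ 2 * (R + 1) * δ := by
        calc |(v - pick w) (Gt x) - (v - pick w) y|
            = ‖(v - pick w) (Gt x - y)‖ := by rw [← map_sub]; rfl
          _ ≤ ‖v - pick w‖ * ‖Gt x - y‖ := (v - pick w).le_opNorm _
          _ ≤ 2 * (R + 1) * δ := by
              apply mul_le_mul
              · calc ‖v - pick w‖ ≤ ‖v‖ + ‖pick w‖ := norm_sub_le _ _
                  _ ≤ 2 * (R + 1) := by linarith
              · rw [← dist_eq_norm]; exact hydist.le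
              · exact norm_nonneg _
              · positivity
      have h2 : |(v - pick w) y| < ε / 4 := by
        have hle : dist (Φ v ⟨y, hyt⟩) (w ⟨y, hyt⟩) < ε / 4 :=
          lt_of_le_of_lt (dist_le_pi_dist (X := fun _ : ↥t => ℝ) (Φ v) w ⟨y, hyt⟩) hwdist
        have hwy : pick w y = w ⟨y, hyt⟩ := congrFun hpΦ ⟨y, hyt⟩
        have heq2 : (v - pick w) y = Φ v ⟨y, hyt⟩ - w ⟨y, hyt⟩ := by
          simp [hΦdef, ← hwy]
        rw [heq2, ← Real.dist_eq]
        exact hle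
      have hδval : 2 * (R + 1) * δ = ε / 2 := by
        rw [hδdef]; field_simp; ring
      have htri : |(v - pick w) (Gt x)| ≤
          |(v - pick w) (Gt x) - (v - pick w) y| + |(v - pick w) y| := by
        have := abs_add_le ((v - pick w) (Gt x) - (v - pick w) y) ((v - pick w) y)
        simpa using this
      have hnorm_eq : ‖(v - pick w) (Gt x)‖ = |(v - pick w) (Gt x)| := rfl
      rw [hnorm_eq]
      linarith [h1, h2.le, htri]
    linarith [hbound]
  · -- closed
    set Bw : Set (WeakDual ℝ Xt) :=
      WeakDual.toStrongDual ⁻¹' Metric.closedBall (0 : StrongDual ℝ Xt) R with hBwdef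
    have hBwc : IsCompact Bw := WeakDual.isCompact_closedBall (𝕜 := ℝ) (E := Xt) 0 R
    set Gw : WeakDual ℝ Xt → WeakDual ℝ Xt :=
      fun φ => StrongDual.toWeakDual (G (WeakDual.toStrongDual φ)) with hGwdef
    have hGwc : Continuous Gw := by
      apply WeakDual.continuous_of_continuous_eval
      intro y
      have : (fun φ : WeakDual ℝ Xt => Gw φ y) = fun φ => φ (Gt y) := by
        funext φ
        exact hGadj _ _
      rw [this]
      exact WeakDual.eval_continuous (Gt y)
    have hcompw : IsCompact (Gw '' Bw) := hBwc.image hGwc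
    have hclw : IsClosed (Gw '' Bw) := hcompw.isClosed
    have heq : G '' Metric.closedBall 0 R =
        (fun x' : StrongDual ℝ Xt => StrongDual.toWeakDual x') ⁻¹' (Gw '' Bw) := by
      ext u
      constructor
      · rintro ⟨v, hv, rfl⟩
        exact ⟨StrongDual.toWeakDual v, hv, rfl⟩
      · rintro ⟨φ, hφ, hφu⟩
        refine ⟨WeakDual.toStrongDual φ, hφ, ?_⟩
        exact congrArg WeakDual.toStrongDual hφu
    rw [heq]
    exact hclw.preimage NormedSpace.Dual.toWeakDual_continuous


/-- Existence of a minimizer of the Tikhonov functional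
`T_α^δ(u) = ‖F(u) − f^δ‖^r + α‖G⁻¹(u − ū)‖^r` over `D = D(F) ∩ range G`,
where `X = X̃*` is the dual of a separable Banach space and `G` is the adjoint
of a compact operator `G̃` on `X̃`. -/
theorem tikhonov_minimizer_exists
    (Xt : Type*) [NormedAddCommGroup Xt] [NormedSpace ℝ Xt] [CompleteSpace Xt]
    [TopologicalSpace.SeparableSpace Xt]
    (Y : Type*) [NormedAddCommGroup Y] [NormedSpace ℝ Y]
    (Gt : Xt →L[ℝ] Xt) (hGtcompact : IsCompactOperator Gt)
    (G : StrongDual ℝ Xt →L[ℝ] StrongDual ℝ Xt)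
    (hGadj : ∀ (φ : StrongDual ℝ Xt) (x : Xt), G φ x = φ (Gt x))
    (hGinj : Function.Injective G)
    (F : StrongDual ℝ Xt → Y) (DF : Set (StrongDual ℝ Xt))
    (hDFclosed : IsClosed DF) (hFcont : ContinuousOn F DF)
    (D : Set (StrongDual ℝ Xt)) (hD : D = DF ∩ Set.range G)
    (hDne : D.Nonempty)
    (r : ℝ) (hr : 0 < r)
    (ubar : StrongDual ℝ Xt) (hubar : ubar ∈ Set.range G)
    (α : ℝ) (hα : 0 < α) (fδ : Y)
    (T : StrongDual ℝ Xt → ℝ)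
    (hT : ∀ u ∈ D, ∀ v : StrongDual ℝ Xt, G v = u - ubar →
      T u = ‖F u - fδ‖ ^ r + α * ‖v‖ ^ r) :
    ∃ ustar ∈ D, ∀ u ∈ D, T ustar ≤ T u := by
  classical
  obtain ⟨b, hb⟩ := hubar
  -- every element of D has a preimage for `u - ubar`
  have hvex : ∀ u ∈ D, ∃ v, G v = u - ubar := by
    intro u hu
    rw [hD] at hu
    obtain ⟨a, ha⟩ := hu.2
    exact ⟨a - b, by rw [map_sub, ha, hb]⟩
  have hTnonneg : ∀ u ∈ D, 0 ≤ T u := by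
    intro u hu
    obtain ⟨v, hv⟩ := hvex u hu
    rw [hT u hu v hv]
    have h1 : (0:ℝ) ≤ ‖F u - fδ‖ ^ r := Real.rpow_nonneg (norm_nonneg _) r
    have h2 : (0:ℝ) ≤ ‖v‖ ^ r := Real.rpow_nonneg (norm_nonneg _) r
    nlinarith
  set S : Set ℝ := T '' D with hSdef
  have hSne : S.Nonempty := hDne.image T
  have hSbdd : BddBelow S := by
    refine ⟨0, ?_⟩
    rintro x ⟨u, hu, rfl⟩
    exact hTnonneg u hu
  set m := sInf S with hmdef
  have hmle : ∀ u ∈ D, m ≤ T u := fun u hu => csInf_le hSbdd ⟨u, hu, rfl⟩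
  obtain ⟨c, hcanti, hc, hcS⟩ := exists_seq_tendsto_sInf hSne hSbdd
  choose u hu hTu using hcS
  have hTtend : Tendsto (fun n => T (u n)) atTop (𝓝 m) := by
    have : (fun n => T (u n)) = c := funext fun n => hTu n
    rw [this]; exact hc
  choose v hv using fun n => hvex (u n) (hu n)
  have hform : ∀ n, T (u n) = ‖F (u n) - fδ‖ ^ r + α * ‖v n‖ ^ r :=
    fun n => hT _ (hu n) _ (hv n)
  -- uniform bound on ‖v n‖
  have hTle : ∀ n, T (u n) ≤ c 0 := by
    intro n
    rw [hTu n] at *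
    exact hcanti (Nat.zero_le n)
  set Rb : ℝ := (c 0 / α) ^ r⁻¹ with hRbdef
  have hvRb : ∀ n, ‖v n‖ ≤ Rb := by
    intro n
    have h1 : α * ‖v n‖ ^ r ≤ c 0 := by
      have := hTle n
      rw [hform n] at this
      have h2 : (0:ℝ) ≤ ‖F (u n) - fδ‖ ^ r := Real.rpow_nonneg (norm_nonneg _) r
      linarith
    have h3 : ‖v n‖ ^ r ≤ c 0 / α := by
      rw [le_div_iff₀ hα]; linarith [h1]
    calc ‖v n‖ = (‖v n‖ ^ r) ^ r⁻¹ := (Real.rpow_rpow_inv (norm_nonneg _) hr.ne').symm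
      _ ≤ (c 0 / α) ^ r⁻¹ :=
          Real.rpow_le_rpow (Real.rpow_nonneg (norm_nonneg _) r) h3 (by positivity)
  -- extract convergent subsequence of `G (v n)` using compactness
  have hcomp : IsCompact (G '' Metric.closedBall 0 Rb) :=
    aux_isCompact_image_closedBall Gt hGtcompact G hGadj Rb
  have hmem : ∀ n, G (v n) ∈ G '' Metric.closedBall 0 Rb := by
    intro n
    exact ⟨v n, by simpa [Metric.mem_closedBall, dist_eq_norm] using hvRb n, rfl⟩
  obtain ⟨w, hwS, ψ1, hψ1, hGv1⟩ := hcomp.tendsto_subseq hmem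
  -- extract subsequence along which ‖v n‖ converges
  have hbdd : ∀ n, ‖v (ψ1 n)‖ ∈ Set.Icc (0:ℝ) Rb :=
    fun n => ⟨norm_nonneg _, hvRb _⟩
  obtain ⟨L, hLmem, ψ2, hψ2, hnorm⟩ :=
    tendsto_subseq_of_bounded (Bornology.IsBounded.subset (Metric.isBounded_Icc 0 Rb)
      (Set.Subset.refl _)) hbdd
  have hLIcc : L ∈ Set.Icc (0:ℝ) Rb := by
    rwa [closure_Icc] at hLmem
  set φn : ℕ → ℕ := ψ1 ∘ ψ2 with hφndef
  have hφnmono : StrictMono φn := hψ1.comp hψ2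
  have hGv : Tendsto (fun n => G (v (φn n))) atTop (𝓝 w) :=
    hGv1.comp hψ2.tendsto_atTop
  have hnormφ : Tendsto (fun n => ‖v (φn n)‖) atTop (𝓝 L) := hnorm
  have hTφ : Tendsto (fun n => T (u (φn n))) atTop (𝓝 m) :=
    hTtend.comp hφnmono.tendsto_atTop
  -- limit point
  set ustar := w + ubar with hustardef
  have hueq : ∀ n, u n = G (v n) + ubar := by
    intro n
    have := hv n
    linear_combination (norm := abel) this.symm
  have hutend : Tendsto (fun n => u (φn n)) atTop (𝓝 ustar) := by
    have h1 : Tendsto (fun n => G (v (φn n)) + ubar) atTop (𝓝 (w + ubar)) :=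
      hGv.add_const ubar
    have h2 : (fun n => u (φn n)) = fun n => G (v (φn n)) + ubar :=
      funext fun n => hueq (φn n)
    rw [h2]; exact h1
  obtain ⟨v0, hv0ball, hv0⟩ := hwS
  have hustarDF : ustar ∈ DF := by
    apply hDFclosed.mem_of_tendsto hutend
    exact Filter.Eventually.of_forall fun n => (hD ▸ hu (φn n)).1
  have hustarD : ustar ∈ D := by
    rw [hD]
    refine ⟨hustarDF, ⟨v0 + b, ?_⟩⟩
    rw [map_add, hv0, hb]
  have hvstar : G v0 = ustar - ubar := by
    rw [hv0, hustardef]; abel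
  -- the norm of the preimage is ≤ L
  have hv0L : ‖v0‖ ≤ L := by
    apply le_of_forall_pos_le_add
    intro ε hε
    have hcompε : IsCompact (G '' Metric.closedBall 0 (L + ε)) :=
      aux_isCompact_image_closedBall Gt hGtcompact G hGadj (L + ε)
    have hwmem : w ∈ G '' Metric.closedBall 0 (L + ε) := by
      apply hcompε.isClosed.mem_of_tendsto hGv
      have hev : ∀ᶠ n in atTop, ‖v (φn n)‖ < L + ε := by
        have : L < L + ε := by linarith
        exact hnormφ.eventually_lt_const this
      filter_upwards [hev] with n hn
      exact ⟨v (φn n), by simpa [Metric.mem_closedBall, dist_eq_norm] using hn.le, rfl⟩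
    obtain ⟨vε, hvεball, hvε⟩ := hwmem
    have : vε = v0 := hGinj (by rw [hvε, hv0])
    rw [← this]
    simpa [Metric.mem_closedBall, dist_eq_norm] using hvεball
  -- convergence of the data-fidelity term
  have hFD : Tendsto (fun n => F (u (φn n))) atTop (𝓝 (F ustar)) := by
    have hcw : Tendsto F (nhdsWithin ustar DF) (𝓝 (F ustar)) :=
      (hFcont ustar hustarDF).tendsto
    apply hcw.comp
    rw [tendsto_nhdsWithin_iff]
    exact ⟨hutend, Filter.Eventually.of_forall fun n => (hD ▸ hu (φn n)).1⟩
  have hrpow_cont : ∀ a : ℝ, ContinuousAt (fun x : ℝ => x ^ r) a ∨ True := fun _ => Or.inr trivial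
  have hnF : Tendsto (fun n => ‖F (u (φn n)) - fδ‖ ^ r) atTop (𝓝 (‖F ustar - fδ‖ ^ r)) := by
    have h1 : Tendsto (fun n => ‖F (u (φn n)) - fδ‖) atTop (𝓝 ‖F ustar - fδ‖) :=
      ((hFD.sub_const fδ).norm)
    exact ((Real.continuousAt_rpow_const _ r (Or.inr hr.le)).tendsto).comp h1
  have hnv : Tendsto (fun n => α * ‖v (φn n)‖ ^ r) atTop (𝓝 (α * L ^ r)) := by
    have h1 : Tendsto (fun n => ‖v (φn n)‖ ^ r) atTop (𝓝 (L ^ r)) :=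
      ((Real.continuousAt_rpow_const _ r (Or.inr hr.le)).tendsto).comp hnormφ
    exact h1.const_mul α
  have hmeq : ‖F ustar - fδ‖ ^ r + α * L ^ r = m := by
    apply tendsto_nhds_unique (hnF.add hnv)
    have : (fun n => ‖F (u (φn n)) - fδ‖ ^ r + α * ‖v (φn n)‖ ^ r)
        = fun n => T (u (φn n)) := funext fun n => (hform (φn n)).symm
    rw [this]; exact hTφ
  have hTustar : T ustar ≤ m := by
    rw [hT ustar hustarD v0 hvstar, ← hmeq]
    have : ‖v0‖ ^ r ≤ L ^ r := Real.rpow_le_rpow (norm_nonneg _) hv0L hr.le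
    nlinarith
  exact ⟨ustar, hustarD, fun u' hu' => hTustar.trans (hmle u' hu')⟩
end

section
/- Every minimizing sequence of the Tikhonov functional over D has a subsequence that converges in the norm of X to a minimizer: if (u_n) ⊆ D satisfies T_α^δ(u_n) → inf_{u ∈ D} T_α^δ(u), then there is a subsequence (u_{n_k}) and an element û ∈ D with ‖u_{n_k} − û‖ → 0 and T_α^δ(û) = inf_{u ∈ D} T_α^δ(u). -/
open Filter Set Topology

set_option maxHeartbeats 2000000

private lemma rpow_cancel {x r : ℝ} (hx : 0 ≤ x) (hr : r ≠ 0) : (x ^ r) ^ r⁻¹ = x :=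
  Real.rpow_rpow_inv hx hr

/-- Every minimizing sequence of the Tikhonov functional over `D` has a subsequence
converging in the norm of `X` to a minimizer. -/
theorem tikhonov_minimizing_sequence_subconverges
    (Xt : Type*) [NormedAddCommGroup Xt] [NormedSpace ℝ Xt] [CompleteSpace Xt]
    [TopologicalSpace.SeparableSpace Xt]
    (Y : Type*) [NormedAddCommGroup Y] [NormedSpace ℝ Y]
    (Gt : Xt →L[ℝ] Xt) (hGtcompact : IsCompactOperator Gt)
    (G : StrongDual ℝ Xt →L[ℝ] StrongDual ℝ Xt)
    (hGadj : ∀ (φ : StrongDual ℝ Xt) (x : Xt), G φ x = φ (Gt x))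
    (hGinj : Function.Injective G)
    (F : StrongDual ℝ Xt → Y) (DF : Set (StrongDual ℝ Xt))
    (hDFclosed : IsClosed DF) (hFcont : ContinuousOn F DF)
    (D : Set (StrongDual ℝ Xt)) (hD : D = DF ∩ Set.range G)
    (hDne : D.Nonempty)
    (r : ℝ) (hr : 0 < r)
    (ubar : StrongDual ℝ Xt) (hubar : ubar ∈ Set.range G)
    (α : ℝ) (hα : 0 < α) (fδ : Y)
    (T : StrongDual ℝ Xt → ℝ)
    (hT : ∀ u ∈ D, ∀ v : StrongDual ℝ Xt, G v = u - ubar →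
      T u = ‖F u - fδ‖ ^ r + α * ‖v‖ ^ r)
    (un : ℕ → StrongDual ℝ Xt) (hun : ∀ n, un n ∈ D)
    (hmin : Tendsto (fun n => T (un n)) atTop (𝓝 (sInf (T '' D)))) :
    ∃ φ : ℕ → ℕ, StrictMono φ ∧ ∃ uhat ∈ D,
      Tendsto (fun k => ‖un (φ k) - uhat‖) atTop (𝓝 0) ∧
      T uhat = sInf (T '' D) := by
  classical
  obtain ⟨q, hq⟩ := hubar
  -- for every `u ∈ D`, `u - ubar` lies in the range of `G`
  have hrange : ∀ u ∈ D, u - ubar ∈ Set.range G := by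
    intro u hu
    rw [hD] at hu
    obtain ⟨p, hp⟩ := hu.2
    exact ⟨p - q, by rw [map_sub, hp, hq]⟩
  have hunDF : ∀ n, un n ∈ DF := fun n => by
    have := hun n; rw [hD] at this; exact this.1
  -- choose v n with G (v n) = un n - ubar
  have hex : ∀ n, ∃ w, G w = un n - ubar := fun n => hrange (un n) (hun n)
  choose v hv using hex
  have hTn : ∀ n, T (un n) = ‖F (un n) - fδ‖ ^ r + α * ‖v n‖ ^ r :=
    fun n => hT (un n) (hun n) (v n) (hv n)
  -- lower bound 0 for T on D
  have hbdd : BddBelow (T '' D) := by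
    refine ⟨0, fun y hy => ?_⟩
    obtain ⟨u, hu, rfl⟩ := hy
    obtain ⟨w, hw⟩ := hrange u hu
    rw [hT u hu w hw]
    have h1 : (0:ℝ) ≤ ‖F u - fδ‖ ^ r := Real.rpow_nonneg (norm_nonneg _) r
    have h2 : (0:ℝ) ≤ ‖w‖ ^ r := Real.rpow_nonneg (norm_nonneg _) r
    nlinarith
  -- uniform bound on ‖v n‖
  obtain ⟨B₀, hB₀⟩ := hmin.bddAbove_range
  set B : ℝ := max B₀ 0 with hBdef
  have hB : ∀ n, T (un n) ≤ B := fun n => le_trans (hB₀ ⟨n, rfl⟩) (le_max_left _ _)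
  set R : ℝ := (B / α) ^ r⁻¹ with hRdef
  have hBα : (0:ℝ) ≤ B / α := div_nonneg (le_max_right _ _) hα.le
  have hR0 : 0 ≤ R := Real.rpow_nonneg hBα _
  have hvR : ∀ n, ‖v n‖ ≤ R := by
    intro n
    have h1 : α * ‖v n‖ ^ r ≤ B := by
      have := hTn n
      have h2 : (0:ℝ) ≤ ‖F (un n) - fδ‖ ^ r := Real.rpow_nonneg (norm_nonneg _) r
      have := hB n
      linarith [hTn n ▸ hB n, h2]
    have h2 : ‖v n‖ ^ r ≤ B / α := (le_div_iff₀' hα).2 h1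
    calc ‖v n‖ = (‖v n‖ ^ r) ^ r⁻¹ := (rpow_cancel (norm_nonneg _) hr.ne').symm
      _ ≤ (B / α) ^ r⁻¹ := Real.rpow_le_rpow (Real.rpow_nonneg (norm_nonneg _) r) h2 (by positivity)
  -- dense sequence in Xt
  obtain ⟨x, hx⟩ := TopologicalSpace.exists_dense_seq Xt
  -- diagonal extraction via compactness of a product of intervals
  have hScompact : IsSeqCompact (Set.univ.pi fun m : ℕ => Icc (-(R * ‖x m‖)) (R * ‖x m‖)) :=
    (isCompact_univ_pi fun m => isCompact_Icc).isSeqCompact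
  have hmemS : ∀ n, (fun m => v n (x m)) ∈ Set.univ.pi fun m : ℕ =>
      Icc (-(R * ‖x m‖)) (R * ‖x m‖) := by
    intro n
    rw [Set.mem_univ_pi]
    intro m
    rw [Set.mem_Icc, ← abs_le]
    calc |v n (x m)| = ‖v n (x m)‖ := rfl
      _ ≤ ‖v n‖ * ‖x m‖ := (v n).le_opNorm (x m)
      _ ≤ R * ‖x m‖ := mul_le_mul_of_nonneg_right (hvR n) (norm_nonneg _)
  obtain ⟨g, -, σ, hσ, hg⟩ := hScompact hmemS
  have hgm : ∀ m, Tendsto (fun k => v (σ k) (x m)) atTop (𝓝 (g m)) := by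
    intro m
    exact (tendsto_pi_nhds.1 hg m)
  -- pointwise Cauchy
  have hcauchy : ∀ z : Xt, CauchySeq fun k => v (σ k) z := by
    intro z
    rw [Metric.cauchySeq_iff]
    intro ε hε
    obtain ⟨m, hm⟩ := hx.exists_dist_lt z (show (0:ℝ) < ε / (4 * (R + 1)) by positivity)
    obtain ⟨N, hN⟩ := Metric.cauchySeq_iff.1 (hgm m).cauchySeq (ε / 2) (by positivity)
    refine ⟨N, fun a ha b hb => ?_⟩
    have key : ∀ k, dist (v (σ k) z) (v (σ k) (x m)) ≤ ε / 4 := by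
      intro k
      rw [dist_eq_norm, ← map_sub]
      calc ‖v (σ k) (z - x m)‖ ≤ ‖v (σ k)‖ * ‖z - x m‖ := (v (σ k)).le_opNorm _
        _ ≤ (R + 1) * (ε / (4 * (R + 1))) := by
            apply mul_le_mul (by linarith [hvR (σ k)]) ?_ (norm_nonneg _) (by linarith)
            rw [← dist_eq_norm]
            exact hm.le
        _ = ε / 4 := by field_simp
    calc dist (v (σ a) z) (v (σ b) z)
        ≤ dist (v (σ a) z) (v (σ a) (x m)) + dist (v (σ a) (x m)) (v (σ b) (x m))
            + dist (v (σ b) (x m)) (v (σ b) z) := dist_triangle4 _ _ _ _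
      _ < ε / 4 + ε / 2 + ε / 4 := by
          have h1 := key a
          have h2 := key b
          have h3 := hN a ha b hb
          rw [dist_comm] at h2
          linarith
      _ = ε := by ring
  have hlim : ∀ z : Xt, ∃ l : ℝ, Tendsto (fun k => v (σ k) z) atTop (𝓝 l) :=
    fun z => cauchySeq_tendsto_of_complete (hcauchy z)
  choose h hh using hlim
  have hptwise : Tendsto (fun k (z : Xt) => v (σ k) z) atTop (𝓝 h) := tendsto_pi_nhds.2 hh
  set vhat : StrongDual ℝ Xt := continuousLinearMapOfTendsto (fun k => v (σ k)) hptwise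
    with hvhatdef
  have hvhatz : ∀ z : Xt, Tendsto (fun k => v (σ k) z) atTop (𝓝 (vhat z)) := fun z => hh z
  -- norm convergence of G (v (σ k)) to G vhat via compactness of Gt
  obtain ⟨K, hKc, hKn⟩ := hGtcompact
  obtain ⟨δ, hδ, hδK⟩ := Metric.mem_nhds_iff.1 hKn
  set C : ℝ := R + ‖vhat‖ + 1 with hCdef
  have hC1 : (1:ℝ) ≤ C := by
    have := norm_nonneg vhat
    simp only [hCdef]; linarith
  have hC0 : (0:ℝ) < C := by linarith
  have hwC : ∀ k, ‖v (σ k) - vhat‖ ≤ C := by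
    intro k
    calc ‖v (σ k) - vhat‖ ≤ ‖v (σ k)‖ + ‖vhat‖ := norm_sub_le _ _
      _ ≤ C := by have := hvR (σ k); simp only [hCdef]; linarith
  have hGsub : Tendsto (fun k => G (v (σ k)) - G vhat) atTop (𝓝 0) := by
    rw [NormedAddCommGroup.tendsto_nhds_zero]
    intro ε hε
    set ε' : ℝ := δ * ε / (8 * C) with hε'def
    have hε' : 0 < ε' := by positivity
    obtain ⟨t, htf, htK⟩ := (Metric.totallyBounded_iff).1 hKc.totallyBounded ε' hε'
    have hev : ∀ᶠ k in atTop, ∀ y ∈ t, ‖v (σ k) y - vhat y‖ < ε' := by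
      rw [eventually_all_finite htf]
      intro y _
      have h0 : Tendsto (fun k => v (σ k) y - vhat y) atTop (𝓝 0) := by
        simpa using (hvhatz y).sub (tendsto_const_nhds (x := vhat y))
      exact (NormedAddCommGroup.tendsto_nhds_zero.1 h0) ε' hε'
    filter_upwards [hev] with k hk
    set w : StrongDual ℝ Xt := v (σ k) - vhat with hwdef
    have hGw : G (v (σ k)) - G vhat = G w := by rw [hwdef, map_sub]
    rw [hGw]
    have hbound : ‖G w‖ ≤ ε / 2 := by
      refine ContinuousLinearMap.opNorm_le_of_shell (ε := δ) hδ (by positivity)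
        (c := (2:ℝ)) (by norm_num) ?_
      intro z hz1 hz2
      have hzK : Gt z ∈ K := hδK (by rwa [Metric.mem_ball, dist_zero_right])
      obtain ⟨y, hyt, hyz⟩ := Set.mem_iUnion₂.1 (htK hzK)
      have hd : ‖Gt z - y‖ < ε' := by rwa [← dist_eq_norm]
      have h1 : ‖w y‖ < ε' := by
        have := hk y hyt
        simpa [hwdef, ContinuousLinearMap.sub_apply] using this
      have h2 : ‖w (Gt z) - w y‖ ≤ C * ε' := by
        rw [← map_sub]
        calc ‖w (Gt z - y)‖ ≤ ‖w‖ * ‖Gt z - y‖ := w.le_opNorm _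
          _ ≤ C * ε' := mul_le_mul (hwC k) hd.le (norm_nonneg _) hC0.le
      have h3 : ‖G w z‖ ≤ 2 * C * ε' := by
        rw [hGadj]
        calc ‖w (Gt z)‖ = ‖w y + (w (Gt z) - w y)‖ := by rw [add_sub_cancel]
          _ ≤ ‖w y‖ + ‖w (Gt z) - w y‖ := norm_add_le _ _
          _ ≤ C * ε' + C * ε' := by
              have : ε' ≤ C * ε' := le_mul_of_one_le_left hε'.le hC1
              linarith
          _ = 2 * C * ε' := by ring
      have h4 : 2 * C * ε' = ε / 2 * (δ / 2) := by
        rw [hε'def]; field_simp; ring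
      have h5 : δ / 2 ≤ ‖z‖ := by
        have : ‖(2:ℝ)‖ = 2 := by norm_num
        rw [this] at hz1
        linarith
      calc ‖G w z‖ ≤ ε / 2 * (δ / 2) := by rw [← h4]; exact h3
        _ ≤ ε / 2 * ‖z‖ := mul_le_mul_of_nonneg_left h5 (by positivity)
    linarith
  have hGtend : Tendsto (fun k => G (v (σ k))) atTop (𝓝 (G vhat)) := by
    have := hGsub.add_const (G vhat)
    simpa using this
  -- define uhat
  set uhat : StrongDual ℝ Xt := G vhat + ubar with huhatdef
  have hun_eq : ∀ n, un n = G (v n) + ubar := fun n => by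
    rw [hv n]; abel
  have hconv : Tendsto (fun k => un (σ k)) atTop (𝓝 uhat) := by
    have h1 : Tendsto (fun k => G (v (σ k)) + ubar) atTop (𝓝 (G vhat + ubar)) :=
      hGtend.add_const ubar
    simpa [← hun_eq, huhatdef] using h1
  have huhatDF : uhat ∈ DF :=
    hDFclosed.mem_of_tendsto hconv (Eventually.of_forall fun k => hunDF (σ k))
  have huhatD : uhat ∈ D := by
    rw [hD]
    exact ⟨huhatDF, ⟨vhat + q, by rw [map_add, hq, huhatdef]⟩⟩
  -- convergence of the data-fit term
  have hFconv : Tendsto (fun k => F (un (σ k))) atTop (𝓝 (F uhat)) :=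
    (hFcont uhat huhatDF).tendsto.comp
      (tendsto_nhdsWithin_iff.2 ⟨hconv, Eventually.of_forall fun k => hunDF (σ k)⟩)
  set I : ℝ := sInf (T '' D) with hIdef
  set a : ℝ := ‖F uhat - fδ‖ ^ r with hadef
  have haconv : Tendsto (fun k => ‖F (un (σ k)) - fδ‖ ^ r) atTop (𝓝 a) :=
    ((hFconv.sub_const fδ).norm).rpow_const (Or.inr hr.le)
  have hTconv : Tendsto (fun k => T (un (σ k))) atTop (𝓝 I) :=
    hmin.comp hσ.tendsto_atTop
  have hbconv : Tendsto (fun k => α * ‖v (σ k)‖ ^ r) atTop (𝓝 (I - a)) := by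
    have heq : (fun k => α * ‖v (σ k)‖ ^ r)
        = fun k => T (un (σ k)) - ‖F (un (σ k)) - fδ‖ ^ r := by
      funext k; rw [hTn (σ k)]; ring
    rw [heq]
    exact hTconv.sub haconv
  set L : ℝ := I - a with hLdef
  have hL0 : (0:ℝ) ≤ L :=
    le_of_tendsto_of_tendsto' tendsto_const_nhds hbconv
      (fun k => by positivity)
  have hLα : (0:ℝ) ≤ L / α := by positivity
  set M : ℝ := (L / α) ^ r⁻¹ with hMdef
  have hM0 : 0 ≤ M := Real.rpow_nonneg hLα _
  have hnormconv : Tendsto (fun k => ‖v (σ k)‖) atTop (𝓝 M) := by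
    have heq : (fun k => ‖v (σ k)‖) = fun k => ((α * ‖v (σ k)‖ ^ r) / α) ^ r⁻¹ := by
      funext k
      rw [mul_div_cancel_left₀ _ hα.ne', rpow_cancel (norm_nonneg _) hr.ne']
    rw [heq]
    exact (hbconv.div_const α).rpow_const (Or.inr (by positivity))
  have hvhatM : ‖vhat‖ ≤ M := by
    refine ContinuousLinearMap.opNorm_le_bound _ hM0 fun z => ?_
    refine le_of_tendsto_of_tendsto' ((hvhatz z).norm) (hnormconv.mul_const ‖z‖) fun k => ?_
    exact (v (σ k)).le_opNorm z
  have hThat : T uhat = a + α * ‖vhat‖ ^ r :=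
    hT uhat huhatD vhat (by rw [huhatdef]; abel)
  have hMr : M ^ r = L / α := by
    rw [hMdef, ← Real.rpow_mul hLα, inv_mul_cancel₀ hr.ne', Real.rpow_one]
  have hle : T uhat ≤ I := by
    rw [hThat]
    have h1 : ‖vhat‖ ^ r ≤ M ^ r := Real.rpow_le_rpow (norm_nonneg _) hvhatM hr.le
    have h2 : α * ‖vhat‖ ^ r ≤ α * (L / α) := by
      rw [← hMr]
      exact mul_le_mul_of_nonneg_left h1 hα.le
    have h3 : α * (L / α) = L := by field_simp
    have : a + L = I := by rw [hLdef]; ring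
    linarith
  have hge : I ≤ T uhat := csInf_le hbdd ⟨uhat, huhatD, rfl⟩
  exact ⟨σ, hσ, uhat, huhatD, tendsto_iff_norm_sub_tendsto_zero.1 hconv,
    le_antisymm hle hge⟩
end

section
/- Regularized solutions are stable in the norm of X with respect to perturbations of the data: if (f_n) ⊆ Y satisfies ‖f_n − f^δ‖ → 0 and for each n the element u_n ∈ D is a minimizer over D of u ↦ ‖F(u) − f_n‖^r + α‖G^{-1}(u − ū)‖^r, then (u_n) is a minimizing sequence for T_α^δ and possesses a subsequence converging in the norm of X to a minimizer of T_α^δ over D. -/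
open Filter Set Topology

lemma exists_ptwise_subseq {Xt : Type*} [NormedAddCommGroup Xt] [NormedSpace ℝ Xt]
    [TopologicalSpace.SeparableSpace Xt]
    (v : ℕ → StrongDual ℝ Xt) (C : ℝ) (hC : ∀ n, ‖v n‖ ≤ C) :
    ∃ φ : ℕ → ℕ, StrictMono φ ∧ ∃ w : StrongDual ℝ Xt,
      ∀ x : Xt, Tendsto (fun k => v (φ k) x) atTop (𝓝 (w x)) := by
  have hC0 : 0 ≤ C := le_trans (norm_nonneg _) (hC 0)
  haveI : Nonempty Xt := ⟨0⟩
  set e : ℕ → Xt := TopologicalSpace.denseSeq Xt with he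
  have hdense : DenseRange e := TopologicalSpace.denseRange_denseSeq Xt
  set s : Set (ℕ → ℝ) := Set.univ.pi fun i => Icc (-(C * ‖e i‖)) (C * ‖e i‖) with hs
  have hcs : IsCompact s := isCompact_univ_pi fun i => isCompact_Icc
  have hmem : ∀ n, (fun i => v n (e i)) ∈ s := by
    intro n i _
    have h1 : ‖v n (e i)‖ ≤ C * ‖e i‖ :=
      le_trans ((v n).le_opNorm (e i)) (by gcongr; exact hC n)
    rw [Real.norm_eq_abs, abs_le] at h1
    exact ⟨h1.1, h1.2⟩
  obtain ⟨g, -, φ, hφ, hgconv⟩ := hcs.isSeqCompact hmem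
  have hcoord : ∀ i, Tendsto (fun k => v (φ k) (e i)) atTop (𝓝 (g i)) := by
    intro i
    exact (tendsto_pi_nhds.1 hgconv) i
  -- Cauchy at every point
  have key : ∀ x : Xt, CauchySeq fun k => v (φ k) x := by
    intro x
    rw [Metric.cauchySeq_iff]
    intro ε hε
    have hC1 : (0:ℝ) < C + 1 := by linarith
    obtain ⟨i, hi⟩ := hdense.exists_dist_lt x (by positivity : (0:ℝ) < ε / (4 * (C + 1)))
    have hci : CauchySeq fun k => v (φ k) (e i) := (hcoord i).cauchySeq
    rw [Metric.cauchySeq_iff] at hci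
    obtain ⟨N, hN⟩ := hci (ε / 4) (by positivity)
    refine ⟨N, fun a ha b hb => ?_⟩
    have hxei : ‖x - e i‖ < ε / (4 * (C + 1)) := by
      rwa [dist_eq_norm] at hi
    have bound : ∀ k, ‖v (φ k) x - v (φ k) (e i)‖ ≤ C * ‖x - e i‖ := by
      intro k
      rw [← map_sub]
      exact le_trans ((v (φ k)).le_opNorm _) (by gcongr; exact hC _)
    have hsmall : C * ‖x - e i‖ < ε / 4 := by
      calc C * ‖x - e i‖ ≤ (C + 1) * ‖x - e i‖ := by
            have := norm_nonneg (x - e i); nlinarith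
        _ < (C + 1) * (ε / (4 * (C + 1))) := by
            apply mul_lt_mul_of_pos_left hxei hC1
        _ = ε / 4 := by field_simp
    have h1 := bound a
    have h2 := bound b
    have h3 := hN a ha b hb
    rw [Real.dist_eq] at h3 ⊢
    have e1 : |v (φ a) x - v (φ a) (e i)| < ε / 4 := lt_of_le_of_lt (by
      rw [← Real.norm_eq_abs]; exact h1) hsmall
    have e2 : |v (φ b) x - v (φ b) (e i)| < ε / 4 := lt_of_le_of_lt (by
      rw [← Real.norm_eq_abs]; exact h2) hsmall
    calc |v (φ a) x - v (φ b) x|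
        ≤ |v (φ a) x - v (φ a) (e i)| + |v (φ a) (e i) - v (φ b) (e i)|
          + |v (φ b) (e i) - v (φ b) x| := by
          have := abs_sub_le (v (φ a) x) (v (φ a) (e i)) (v (φ b) x)
          have := abs_sub_le (v (φ a) (e i)) (v (φ b) (e i)) (v (φ b) x)
          linarith
      _ < ε / 4 + ε / 4 + ε / 4 := by
          have e2' : |v (φ b) (e i) - v (φ b) x| < ε / 4 := by rwa [abs_sub_comm]
          exact add_lt_add (add_lt_add e1 h3) e2'
      _ ≤ ε := by linarith
  have hlim : ∀ x : Xt, ∃ l : ℝ, Tendsto (fun k => v (φ k) x) atTop (𝓝 l) :=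
    fun x => cauchySeq_tendsto_of_complete (key x)
  choose g' hg' using hlim
  have hadd : ∀ x y : Xt, g' (x + y) = g' x + g' y := by
    intro x y
    refine tendsto_nhds_unique (hg' (x + y)) ?_
    have : (fun k => v (φ k) (x + y)) = fun k => v (φ k) x + v (φ k) y := by
      funext k; exact map_add _ _ _
    rw [this]
    exact (hg' x).add (hg' y)
  have hsmul : ∀ (c : ℝ) (x : Xt), g' (c • x) = c * g' x := by
    intro c x
    refine tendsto_nhds_unique (hg' (c • x)) ?_
    have : (fun k => v (φ k) (c • x)) = fun k => c * v (φ k) x := by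
      funext k; simp
    rw [this]
    exact (hg' x).const_mul c
  have hbound : ∀ x : Xt, ‖g' x‖ ≤ C * ‖x‖ := by
    intro x
    refine le_of_tendsto (hg' x).norm (Eventually.of_forall fun k => ?_)
    exact le_trans ((v (φ k)).le_opNorm x) (by gcongr; exact hC _)
  let w0 : Xt →ₗ[ℝ] ℝ :=
    { toFun := g'
      map_add' := hadd
      map_smul' := hsmul }
  refine ⟨φ, hφ, w0.mkContinuous C hbound, fun x => hg' x⟩

lemma compact_adjoint_tendsto {Xt : Type*} [NormedAddCommGroup Xt] [NormedSpace ℝ Xt]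
    (Gt : Xt →L[ℝ] Xt) (hGtcompact : IsCompactOperator Gt)
    (G : StrongDual ℝ Xt →L[ℝ] StrongDual ℝ Xt)
    (hGadj : ∀ (φ : StrongDual ℝ Xt) (x : Xt), G φ x = φ (Gt x))
    (v : ℕ → StrongDual ℝ Xt) (w : StrongDual ℝ Xt)
    (C : ℝ) (hC : ∀ n, ‖v n‖ ≤ C) (hw : ‖w‖ ≤ C)
    (hconv : ∀ x : Xt, Tendsto (fun n => v n x) atTop (𝓝 (w x))) :
    Tendsto (fun n => ‖G (v n) - G w‖) atTop (𝓝 0) := by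
  have hC0 : 0 ≤ C := le_trans (norm_nonneg _) (hC 0)
  have hC1 : (0:ℝ) < C + 1 := by linarith
  -- image of the unit ball is contained in a compact set
  have hGt' : IsCompactOperator (Gt : Xt →ₗ[ℝ] Xt) := hGtcompact
  obtain ⟨K, hK, hKsub⟩ :=
    hGt'.image_subset_compact_of_bounded (Metric.isBounded_closedBall (x := (0:Xt)) (r := 1))
  have hTB : TotallyBounded K := hK.totallyBounded
  rw [Metric.tendsto_atTop]
  intro ε hε
  set ε₁ : ℝ := ε / (4 * (C + 1)) with hε₁def
  have hε₁ : 0 < ε₁ := by positivity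
  obtain ⟨t, htfin, htcov⟩ := (Metric.totallyBounded_iff.1 hTB) ε₁ hε₁
  -- eventual closeness on the centers
  have hev : ∀ᶠ n in atTop, ∀ y ∈ t, |v n y - w y| < ε / 4 := by
    rw [eventually_all_finite htfin]
    intro y _
    have := (hconv y).sub_const (w y)
    have h0 : Tendsto (fun n => v n y - w y) atTop (𝓝 0) := by simpa using this
    have := h0.eventually (eventually_abs_sub_lt 0 (by positivity : (0:ℝ) < ε / 4))
    simpa using this
  rw [eventually_atTop] at hev
  obtain ⟨N, hN⟩ := hev
  refine ⟨N, fun n hn => ?_⟩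
  have hbound : ‖G (v n) - G w‖ ≤ 3 * ε / 4 := by
    rw [← map_sub]
    refine ContinuousLinearMap.opNorm_le_bound' _ (by positivity) fun x hx => ?_
    -- normalize
    set x' : Xt := ‖x‖⁻¹ • x with hx'def
    have hxpos : 0 < ‖x‖ := lt_of_le_of_ne (norm_nonneg x) (Ne.symm hx)
    have hx' : ‖x'‖ ≤ 1 := by
      rw [hx'def, norm_smul, norm_inv, norm_norm, inv_mul_cancel₀ (ne_of_gt hxpos)]
    have hmemK : Gt x' ∈ K := hKsub ⟨x', by simpa [Metric.mem_closedBall, dist_eq_norm] using hx', rfl⟩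
    obtain ⟨y, hyt, hy⟩ := Set.mem_iUnion₂.1 (htcov hmemK)
    have hdist : ‖Gt x' - y‖ < ε₁ := by rwa [Metric.mem_ball, dist_eq_norm] at hy
    set ψ := v n - w with hψdef
    have hψnorm : ‖ψ‖ ≤ 2 * (C + 1) := by
      calc ‖ψ‖ ≤ ‖v n‖ + ‖w‖ := norm_sub_le _ _
        _ ≤ 2 * (C + 1) := by have := hC n; linarith
    have hterm1 : |ψ (Gt x' - y)| ≤ 2 * (C + 1) * ε₁ := by
      calc |ψ (Gt x' - y)| ≤ ‖ψ‖ * ‖Gt x' - y‖ := ψ.le_opNorm _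
        _ ≤ 2 * (C + 1) * ε₁ := by
            apply mul_le_mul hψnorm hdist.le (norm_nonneg _) (by positivity)
    have h2 : 2 * (C + 1) * ε₁ = ε / 2 := by rw [hε₁def]; field_simp; ring
    have hterm2 : |ψ y| < ε / 4 := by
      have := hN n hn y hyt
      simpa [hψdef] using this
    have hmain : |ψ (Gt x')| ≤ 3 * ε / 4 := by
      have : ψ (Gt x') = ψ (Gt x' - y) + ψ y := by rw [map_sub]; ring
      rw [this]
      calc |ψ (Gt x' - y) + ψ y| ≤ |ψ (Gt x' - y)| + |ψ y| := abs_add_le _ _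
        _ ≤ 3 * ε / 4 := by rw [h2] at hterm1; linarith
    -- scale back
    have hscale : (G ψ) x = ‖x‖ * ψ (Gt x') := by
      have hx2 : Gt x = ‖x‖ • Gt x' := by
        rw [hx'def, map_smul, smul_smul, mul_inv_cancel₀ (ne_of_gt hxpos), one_smul]
      rw [hGadj ψ x, hx2, map_smul, smul_eq_mul]
    have : ‖(G ψ) x‖ = ‖x‖ * |ψ (Gt x')| := by
      rw [hscale, Real.norm_eq_abs, abs_mul, abs_of_pos hxpos]
    rw [this, mul_comm]
    exact mul_le_mul_of_nonneg_right hmain (norm_nonneg x)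
  rw [Real.dist_eq, sub_zero, abs_of_nonneg (norm_nonneg _)]
  exact lt_of_le_of_lt hbound (by linarith)

set_option maxHeartbeats 1000000 in
/-- Stability of regularized solutions with respect to data perturbations:
if `f_n → f^δ` and `u_n` minimizes the Tikhonov functional with data `f_n`,
then `(u_n)` is a minimizing sequence for `T_α^δ` and has a subsequence converging
in norm to a minimizer of `T_α^δ`. -/
theorem tikhonov_stability
    (Xt : Type*) [NormedAddCommGroup Xt] [NormedSpace ℝ Xt] [CompleteSpace Xt]
    [TopologicalSpace.SeparableSpace Xt]
    (Y : Type*) [NormedAddCommGroup Y] [NormedSpace ℝ Y]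
    (Gt : Xt →L[ℝ] Xt) (hGtcompact : IsCompactOperator Gt)
    (G : StrongDual ℝ Xt →L[ℝ] StrongDual ℝ Xt)
    (hGadj : ∀ (φ : StrongDual ℝ Xt) (x : Xt), G φ x = φ (Gt x))
    (hGinj : Function.Injective G)
    (F : StrongDual ℝ Xt → Y) (DF : Set (StrongDual ℝ Xt))
    (hDFclosed : IsClosed DF) (hFcont : ContinuousOn F DF)
    (D : Set (StrongDual ℝ Xt)) (hD : D = DF ∩ Set.range G)
    (hDne : D.Nonempty)
    (r : ℝ) (hr : 0 < r)
    (ubar : StrongDual ℝ Xt) (hubar : ubar ∈ Set.range G)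
    (α : ℝ) (hα : 0 < α) (fδ : Y)
    -- the Tikhonov functional with general data `f`:
    (T : Y → StrongDual ℝ Xt → ℝ)
    (hT : ∀ (f : Y), ∀ u ∈ D, ∀ v : StrongDual ℝ Xt, G v = u - ubar →
      T f u = ‖F u - f‖ ^ r + α * ‖v‖ ^ r)
    -- the perturbed data and corresponding minimizers:
    (fn : ℕ → Y) (hfn : Tendsto (fun n => ‖fn n - fδ‖) atTop (𝓝 0))
    (un : ℕ → StrongDual ℝ Xt) (hunD : ∀ n, un n ∈ D)
    (hunmin : ∀ n, ∀ u' ∈ D, T (fn n) (un n) ≤ T (fn n) u') :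
    Tendsto (fun n => T fδ (un n)) atTop (𝓝 (sInf (T fδ '' D))) ∧
    ∃ φ : ℕ → ℕ, StrictMono φ ∧ ∃ uhat ∈ D,
      Tendsto (fun k => ‖un (φ k) - uhat‖) atTop (𝓝 0) ∧
      ∀ u' ∈ D, T fδ uhat ≤ T fδ u' := by
  obtain ⟨w0, hw0⟩ := hubar
  have hrange : ∀ u ∈ D, ∃ v, G v = u - ubar := by
    intro u hu
    rw [hD] at hu
    obtain ⟨wu, hwu⟩ := hu.2
    exact ⟨wu - w0, by rw [map_sub, hwu, hw0]⟩
  choose vD hvD using hrange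
  have Tval : ∀ f : Y, ∀ u, ∀ hu : u ∈ D, T f u = ‖F u - f‖ ^ r + α * ‖vD u hu‖ ^ r :=
    fun f u hu => hT f u hu (vD u hu) (hvD u hu)
  have Tnonneg : ∀ f : Y, ∀ u, ∀ hu : u ∈ D, 0 ≤ T f u := by
    intro f u hu
    rw [Tval f u hu]
    have h1 : (0:ℝ) ≤ ‖F u - f‖ ^ r := Real.rpow_nonneg (norm_nonneg _) r
    have h2 : (0:ℝ) ≤ ‖vD u hu‖ ^ r := Real.rpow_nonneg (norm_nonneg _) r
    nlinarith
  set S := T fδ '' D with hS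
  have hSne : S.Nonempty := hDne.image _
  have hSbdd : BddBelow S := ⟨0, fun y hy => by obtain ⟨u, hu, rfl⟩ := hy; exact Tnonneg fδ u hu⟩
  set m := sInf S with hm
  have hmle : ∀ u' ∈ D, m ≤ T fδ u' := fun u' h => csInf_le hSbdd ⟨u', h, rfl⟩
  set δn : ℕ → ℝ := fun n => ‖fn n - fδ‖ with hδn
  have hδpos : ∀ n, 0 ≤ δn n := fun n => norm_nonneg _
  -- convergence of the comparison upper bounds
  have hRHS : ∀ u', ∀ hu' : u' ∈ D,
      Tendsto (fun n => (‖F u' - fδ‖ + δn n) ^ r + α * ‖vD u' hu'‖ ^ r) atTop (𝓝 (T fδ u')) := by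
    intro u' hu'
    have h1 : Tendsto (fun n => ‖F u' - fδ‖ + δn n) atTop (𝓝 (‖F u' - fδ‖ + 0)) :=
      tendsto_const_nhds.add hfn
    rw [add_zero] at h1
    have h2 : ContinuousAt (fun t : ℝ => t ^ r) ‖F u' - fδ‖ :=
      Real.continuousAt_rpow_const _ r (Or.inr hr.le)
    have h3 := (h2.tendsto.comp h1).add_const (α * ‖vD u' hu'‖ ^ r)
    rw [Tval fδ u' hu']
    exact h3
  have hTle : ∀ u', ∀ hu' : u' ∈ D, ∀ n,
      T (fn n) (un n) ≤ (‖F u' - fδ‖ + δn n) ^ r + α * ‖vD u' hu'‖ ^ r := by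
    intro u' hu' n
    refine le_trans (hunmin n u' hu') ?_
    rw [Tval (fn n) u' hu']
    have hnorm : ‖F u' - fn n‖ ≤ ‖F u' - fδ‖ + δn n := by
      have he : F u' - fn n = (F u' - fδ) - (fn n - fδ) := by abel
      rw [he]
      exact norm_sub_le _ _
    have := Real.rpow_le_rpow (norm_nonneg _) hnorm hr.le
    linarith
  -- uniform bound
  obtain ⟨u0, hu0⟩ := hDne
  obtain ⟨B, hB⟩ := (hRHS u0 hu0).bddAbove_range
  have hTB : ∀ n, T (fn n) (un n) ≤ B := fun n => le_trans (hTle u0 hu0 n) (hB ⟨n, rfl⟩)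
  have hB0 : 0 ≤ B := le_trans (Tnonneg (fn 0) (un 0) (hunD 0)) (hTB 0)
  set an : ℕ → ℝ := fun n => ‖F (un n) - fn n‖ with han'
  set bn : ℕ → ℝ := fun n => ‖vD (un n) (hunD n)‖ with hbn'
  have hTn : ∀ n, T (fn n) (un n) = an n ^ r + α * bn n ^ r := fun n => Tval (fn n) (un n) (hunD n)
  have hbnr : ∀ n, 0 ≤ bn n ^ r := fun n => Real.rpow_nonneg (norm_nonneg _) r
  have hanr : ∀ n, 0 ≤ an n ^ r := fun n => Real.rpow_nonneg (norm_nonneg _) r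
  have han : ∀ n, an n ^ r ≤ B := by
    intro n
    have h := hTB n
    rw [hTn n] at h
    nlinarith [hbnr n, hα.le]
  have hbnB : ∀ n, bn n ^ r ≤ B / α := by
    intro n
    have h := hTB n
    rw [hTn n] at h
    rw [le_div_iff₀ hα]
    nlinarith [hanr n]
  set A : ℝ := B ^ r⁻¹ with hA'
  have hA0 : 0 ≤ A := Real.rpow_nonneg hB0 _
  have hAn : ∀ n, an n ≤ A := by
    intro n
    have h1 : an n = (an n ^ r) ^ r⁻¹ := (Real.rpow_rpow_inv (norm_nonneg _) hr.ne').symm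
    rw [h1]
    exact Real.rpow_le_rpow (hanr n) (han n) (by positivity)
  set Cv : ℝ := (B / α) ^ r⁻¹ with hCv'
  have hCv0 : 0 ≤ Cv := Real.rpow_nonneg (by positivity) _
  have hCvn : ∀ n, bn n ≤ Cv := by
    intro n
    have h1 : bn n = (bn n ^ r) ^ r⁻¹ := (Real.rpow_rpow_inv (norm_nonneg _) hr.ne').symm
    rw [h1]
    exact Real.rpow_le_rpow (hbnr n) (hbnB n) (by positivity)
  -- uniform continuity of rpow on a compact interval
  have hUC : ∀ ε > (0:ℝ), ∃ η > (0:ℝ), ∀ s t : ℝ, s ∈ Icc (0:ℝ) (A+1) → t ∈ Icc (0:ℝ) (A+1) →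
      |s - t| < η → |s ^ r - t ^ r| < ε := by
    have hcont : ContinuousOn (fun t : ℝ => t ^ r) (Icc 0 (A+1)) := fun x _ =>
      (Real.continuousAt_rpow_const x r (Or.inr hr.le)).continuousWithinAt
    have huc := isCompact_Icc.uniformContinuousOn_of_continuous hcont
    rw [Metric.uniformContinuousOn_iff] at huc
    intro ε hε
    obtain ⟨η, hη, hprop⟩ := huc ε hε
    exact ⟨η, hη, fun s t hsm htm hst => by
      have := hprop s hsm t htm (by rwa [Real.dist_eq])
      rwa [Real.dist_eq] at this⟩
  -- the key eventual bound
  have hmain : ∀ ε > (0:ℝ), ∀ᶠ n in atTop, T fδ (un n) < m + ε := by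
    intro ε hε
    obtain ⟨a, haS, halt⟩ := exists_lt_of_csInf_lt hSne
      (lt_add_of_pos_right m (by positivity : (0:ℝ) < ε/3))
    obtain ⟨u', hu', rfl⟩ := haS
    obtain ⟨η, hη, hηprop⟩ := hUC (ε/3) (by positivity)
    have h1 : ∀ᶠ n in atTop, δn n < min η 1 :=
      hfn.eventually_lt_const (lt_min hη one_pos)
    have h2 : ∀ᶠ n in atTop,
        (‖F u' - fδ‖ + δn n) ^ r + α * ‖vD u' hu'‖ ^ r < m + 2*ε/3 :=
      (hRHS u' hu').eventually_lt_const (by linarith)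
    filter_upwards [h1, h2] with n hn1 hn2
    have hmem1 : an n + δn n ∈ Icc (0:ℝ) (A+1) := by
      constructor
      · positivity
      · have := hAn n
        have := lt_of_lt_of_le hn1 (min_le_right η 1)
        linarith
    have hmem2 : an n ∈ Icc (0:ℝ) (A+1) := ⟨norm_nonneg _, by have := hAn n; linarith⟩
    have hdiff : |(an n + δn n) - an n| < η := by
      rw [add_sub_cancel_left, abs_of_nonneg (hδpos n)]
      exact lt_of_lt_of_le hn1 (min_le_left η 1)
    have hpow : (an n + δn n) ^ r < an n ^ r + ε/3 := by
      have := hηprop (an n + δn n) (an n) hmem1 hmem2 hdiff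
      rw [abs_sub_lt_iff] at this
      linarith [this.1]
    have hFd : ‖F (un n) - fδ‖ ≤ an n + δn n := by
      have he : F (un n) - fδ = (F (un n) - fn n) + (fn n - fδ) := by abel
      rw [he]
      exact norm_add_le _ _
    have hFdr : ‖F (un n) - fδ‖ ^ r ≤ (an n + δn n) ^ r :=
      Real.rpow_le_rpow (norm_nonneg _) hFd hr.le
    have hstep : T fδ (un n) ≤ T (fn n) (un n) + ε/3 := by
      rw [Tval fδ (un n) (hunD n), hTn n]
      have : ‖vD (un n) (hunD n)‖ ^ r = bn n ^ r := rfl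
      rw [this]
      linarith
    have := hTle u' hu' n
    linarith
  -- Part 1
  have part1 : Tendsto (fun n => T fδ (un n)) atTop (𝓝 m) := by
    rw [Metric.tendsto_atTop]
    intro ε hε
    obtain ⟨N, hN⟩ := eventually_atTop.1 (hmain ε hε)
    refine ⟨N, fun n hn => ?_⟩
    rw [Real.dist_eq, abs_sub_lt_iff]
    refine ⟨by linarith [hN n hn], ?_⟩
    have := hmle (un n) (hunD n)
    linarith
  refine ⟨part1, ?_⟩
  -- Part 2: subsequence extraction
  obtain ⟨L, hLmem, φ₁, hφ₁, hL⟩ := tendsto_subseq_of_bounded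
    (Metric.isBounded_Icc (0:ℝ) Cv) (fun n => (⟨norm_nonneg _, hCvn n⟩ : bn n ∈ Icc 0 Cv))
  rw [isClosed_Icc.closure_eq] at hLmem
  have hL0 : 0 ≤ L := hLmem.1
  obtain ⟨φ₂, hφ₂, w, hw⟩ := exists_ptwise_subseq
    (fun k => vD (un (φ₁ k)) (hunD (φ₁ k))) Cv (fun k => hCvn (φ₁ k))
  set φ : ℕ → ℕ := φ₁ ∘ φ₂ with hφ'
  have hφ : StrictMono φ := hφ₁.comp hφ₂
  have hLcomp : Tendsto (fun k => bn (φ k)) atTop (𝓝 L) := hL.comp hφ₂.tendsto_atTop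
  have hwL : ‖w‖ ≤ L := by
    refine ContinuousLinearMap.opNorm_le_bound _ hL0 fun x => ?_
    refine le_of_tendsto_of_tendsto' (hw x).norm (hLcomp.mul_const ‖x‖) fun k => ?_
    exact (vD (un (φ k)) (hunD (φ k))).le_opNorm x
  have hwCv : ‖w‖ ≤ Cv := le_trans hwL hLmem.2
  have hGconv : Tendsto (fun k => ‖G (vD (un (φ k)) (hunD (φ k))) - G w‖) atTop (𝓝 0) :=
    compact_adjoint_tendsto Gt hGtcompact G hGadj
      (fun k => vD (un (φ k)) (hunD (φ k))) w Cv (fun k => hCvn (φ k)) hwCv hw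
  set uhat : StrongDual ℝ Xt := G w + ubar with huhat'
  have hdiffeq : ∀ k, un (φ k) - uhat = G (vD (un (φ k)) (hunD (φ k))) - G w := by
    intro k
    rw [hvD (un (φ k)) (hunD (φ k)), huhat']
    abel
  have hnormconv : Tendsto (fun k => ‖un (φ k) - uhat‖) atTop (𝓝 0) := by
    have : (fun k => ‖un (φ k) - uhat‖) = fun k => ‖G (vD (un (φ k)) (hunD (φ k))) - G w‖ := by
      funext k; rw [hdiffeq k]
    rw [this]
    exact hGconv
  have hunconv : Tendsto (fun k => un (φ k)) atTop (𝓝 uhat) :=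
    tendsto_iff_norm_sub_tendsto_zero.2 hnormconv
  have hDFmem : ∀ n, un n ∈ DF := fun n => (hD ▸ hunD n : un n ∈ DF ∩ Set.range G).1
  have huhatDF : uhat ∈ DF :=
    hDFclosed.mem_of_tendsto hunconv (Eventually.of_forall fun k => hDFmem (φ k))
  have huhatD : uhat ∈ D := by
    rw [hD]
    exact ⟨huhatDF, ⟨w + w0, by rw [map_add, hw0, huhat']⟩⟩
  have hGw : G w = uhat - ubar := by rw [huhat']; abel
  -- F-convergence along the subsequence
  have hwithin : Tendsto (fun k => un (φ k)) atTop (𝓝[DF] uhat) :=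
    tendsto_nhdsWithin_of_tendsto_nhds_of_eventually_within _ hunconv
      (Eventually.of_forall fun k => hDFmem (φ k))
  have hFconv : Tendsto (fun k => F (un (φ k))) atTop (𝓝 (F uhat)) :=
    (hFcont uhat huhatDF).tendsto.comp hwithin
  have hnormF : Tendsto (fun k => ‖F (un (φ k)) - fδ‖ ^ r) atTop (𝓝 (‖F uhat - fδ‖ ^ r)) := by
    have h1 : Tendsto (fun k => ‖F (un (φ k)) - fδ‖) atTop (𝓝 ‖F uhat - fδ‖) :=
      (hFconv.sub_const fδ).norm
    exact (Real.continuousAt_rpow_const _ r (Or.inr hr.le)).tendsto.comp h1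
  have hbconv : Tendsto (fun k => α * bn (φ k) ^ r) atTop (𝓝 (α * L ^ r)) := by
    have h3 : Tendsto (fun k => bn (φ k) ^ r) atTop (𝓝 (L ^ r)) :=
      (Real.continuousAt_rpow_const _ r (Or.inr hr.le)).tendsto.comp hLcomp
    exact h3.const_mul α
  have hTconv : Tendsto (fun k => T fδ (un (φ k))) atTop (𝓝 m) := part1.comp hφ.tendsto_atTop
  have hTeq : (fun k => T fδ (un (φ k))) =
      fun k => ‖F (un (φ k)) - fδ‖ ^ r + α * bn (φ k) ^ r := by
    funext k
    exact Tval fδ (un (φ k)) (hunD (φ k))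
  have hmeq : m = ‖F uhat - fδ‖ ^ r + α * L ^ r := by
    refine tendsto_nhds_unique hTconv ?_
    rw [hTeq]
    exact hnormF.add hbconv
  refine ⟨φ, hφ, uhat, huhatD, hnormconv, ?_⟩
  intro u' hu'
  have hTuhat : T fδ uhat = ‖F uhat - fδ‖ ^ r + α * ‖w‖ ^ r := hT fδ uhat huhatD w hGw
  have hle : T fδ uhat ≤ m := by
    rw [hTuhat, hmeq]
    have hwr : ‖w‖ ^ r ≤ L ^ r := Real.rpow_le_rpow (norm_nonneg _) hwL hr.le
    exact add_le_add_right (mul_le_mul_of_nonneg_left hwr hα.le) _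
  exact le_trans hle (hmle u' hu')
end

section
/- Let R_β, β > 0, be a family of bounded linear operators on X satisfying ‖R_β‖ ≤ c*/β and ‖I − R_β G‖ ≤ c₀ for all β > 0, and R_β G = G R_β for all β > 0. Fix p ∈ (0,1] and let A : X → X be a bounded linear operator that commutes with every R_β and satisfies the interpolation estimate ‖Aw‖ ≤ κ₁ ‖Gw‖^p ‖w‖^{1−p} for all w ∈ X. Then for all β > 0 one has the operator-norm bound ‖R_β A‖ ≤ κ₁ (c₀ + 1)^p c*^{1−p} β^{p−1}. -/
open Filter Set Topology

/-- Lemma 5.1 (generalized): if `‖R_β‖ ≤ c*/β`, `‖I − R_β G‖ ≤ c₀`, `R_β G = G R_β`,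
and `A` commutes with every `R_β` and satisfies the interpolation estimate
`‖Aw‖ ≤ κ₁‖Gw‖^p‖w‖^{1−p}`, then `‖R_β A‖ ≤ κ₁ (c₀+1)^p c*^{1−p} β^{p−1}` for `β > 0`. -/
theorem norm_Rbeta_comp_A_bound
    (X : Type*) [NormedAddCommGroup X] [NormedSpace ℝ X]
    (G : X →L[ℝ] X)
    (cstar c₀ κ₁ : ℝ) (hcstar : 0 < cstar) (hc₀ : 0 < c₀) (hκ₁ : 0 < κ₁)
    (R : ℝ → (X →L[ℝ] X))
    (hR : ∀ β : ℝ, 0 < β → ‖R β‖ ≤ cstar / β)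
    (hS : ∀ β : ℝ, 0 < β → ‖ContinuousLinearMap.id ℝ X - (R β).comp G‖ ≤ c₀)
    (hcomm : ∀ β : ℝ, 0 < β → (R β).comp G = G.comp (R β))
    (p : ℝ) (hp : 0 < p) (hp1 : p ≤ 1)
    (A : X →L[ℝ] X)
    (hAcomm : ∀ β : ℝ, 0 < β → (R β).comp A = A.comp (R β))
    (hinterp : ∀ w : X, ‖A w‖ ≤ κ₁ * ‖G w‖ ^ p * ‖w‖ ^ (1 - p)) :
    ∀ β : ℝ, 0 < β →
      ‖(R β).comp A‖ ≤ κ₁ * (c₀ + 1) ^ p * cstar ^ (1 - p) * β ^ (p - 1) := by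
  intro β hβ
  have hbnd : 0 ≤ κ₁ * (c₀ + 1) ^ p * cstar ^ (1 - p) * β ^ (p - 1) := by
    have h1 : (0:ℝ) ≤ (c₀ + 1) ^ p := Real.rpow_nonneg (by linarith) _
    have h2 : (0:ℝ) ≤ cstar ^ (1 - p) := Real.rpow_nonneg hcstar.le _
    have h3 : (0:ℝ) ≤ β ^ (p - 1) := Real.rpow_nonneg hβ.le _
    positivity
  apply ContinuousLinearMap.opNorm_le_bound _ hbnd
  intro w
  have hcw : (R β).comp A w = A (R β w) := by
    rw [hAcomm β hβ]; rfl
  rw [hcw]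
  have hGR : ‖G (R β w)‖ ≤ (c₀ + 1) * ‖w‖ := by
    have h1 : G (R β w) = w - (ContinuousLinearMap.id ℝ X - (R β).comp G) w := by
      simp [hcomm β hβ]
    rw [h1]
    calc ‖w - (ContinuousLinearMap.id ℝ X - (R β).comp G) w‖
        ≤ ‖w‖ + ‖(ContinuousLinearMap.id ℝ X - (R β).comp G) w‖ := norm_sub_le _ _
      _ ≤ ‖w‖ + c₀ * ‖w‖ := by
          have := ((ContinuousLinearMap.id ℝ X - (R β).comp G)).le_opNorm w
          have h2 : ‖ContinuousLinearMap.id ℝ X - (R β).comp G‖ * ‖w‖ ≤ c₀ * ‖w‖ :=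
            mul_le_mul_of_nonneg_right (hS β hβ) (norm_nonneg w)
          linarith
      _ = (c₀ + 1) * ‖w‖ := by ring
  have hRw : ‖R β w‖ ≤ (cstar / β) * ‖w‖ := by
    calc ‖R β w‖ ≤ ‖R β‖ * ‖w‖ := (R β).le_opNorm w
      _ ≤ (cstar / β) * ‖w‖ := mul_le_mul_of_nonneg_right (hR β hβ) (norm_nonneg w)
  calc ‖A (R β w)‖ ≤ κ₁ * ‖G (R β w)‖ ^ p * ‖R β w‖ ^ (1 - p) := hinterp _
    _ ≤ κ₁ * ((c₀ + 1) * ‖w‖) ^ p * ((cstar / β) * ‖w‖) ^ (1 - p) := by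
        apply mul_le_mul
        · exact mul_le_mul_of_nonneg_left
            (Real.rpow_le_rpow (norm_nonneg _) hGR hp.le) hκ₁.le
        · exact Real.rpow_le_rpow (norm_nonneg _) hRw (by linarith)
        · exact Real.rpow_nonneg (norm_nonneg _) _
        · positivity
    _ = κ₁ * (c₀ + 1) ^ p * cstar ^ (1 - p) * β ^ (p - 1) * ‖w‖ := by
        rw [Real.mul_rpow (by linarith) (norm_nonneg w),
            Real.mul_rpow (by positivity) (norm_nonneg w),
            Real.div_rpow hcstar.le hβ.le]
        have hw : ‖w‖ ^ p * ‖w‖ ^ (1 - p) = ‖w‖ := by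
          rw [← Real.rpow_add_of_nonneg (norm_nonneg w) hp.le (by linarith)]; simp
        have hb : β ^ (p - 1) = (β ^ (1 - p))⁻¹ := by
          rw [← Real.rpow_neg hβ.le]; ring_nf
        rw [hb]
        linear_combination (κ₁ * (c₀ + 1) ^ p * cstar ^ (1 - p) / β ^ (1 - p)) * hw
    _ ≤ κ₁ * (c₀ + 1) ^ p * cstar ^ (1 - p) * β ^ (p - 1) * ‖w‖ := le_refl _
end

section
/- Suppose λ > ω, w ∈ X, and set u := ∫₀^∞ e^{−λq} T(q) w dq (a convergent Bochner integral). Then for every p with 0 ≤ p < p₀ there exists a finite constant C' > 0 such that ‖S_β(T(p)u)‖ ≤ C' β^p / log(1/β) for all β ∈ (0,1). -/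
open Filter Set Topology MeasureTheory

lemma myexp_integral_Ioi (a : ℝ) {b : ℝ} (hb : 0 < b) :
    ∫ x in Set.Ioi a, Real.exp (-b * x) = Real.exp (-b * a) / b := by
  have hderiv : ∀ x ∈ Set.Ici a, HasDerivAt (fun x => -Real.exp (-b * x) / b)
      (Real.exp (-b * x)) x := by
    intro x _
    have h1 : HasDerivAt (fun x : ℝ => -b * x) (-b) x := by
      simpa using (hasDerivAt_id x).const_mul (-b)
    have h2 := (h1.exp.neg).div_const b
    exact h2.congr_deriv (by rw [mul_neg, neg_neg, mul_div_assoc, div_self hb.ne', mul_one])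
  have htend : Tendsto (fun x => -Real.exp (-b * x) / b) atTop (𝓝 0) := by
    have h1 : Tendsto (fun x : ℝ => -b * x) atTop atBot :=
      Tendsto.const_mul_atTop_of_neg (by linarith) tendsto_id
    have h2 : Tendsto (fun x => Real.exp (-b * x)) atTop (𝓝 0) :=
      Real.tendsto_exp_atBot.comp h1
    simpa using (h2.neg.div_const b)
  have := MeasureTheory.integral_Ioi_of_hasDerivAt_of_tendsto' hderiv
    (exp_neg_integrableOn_Ioi a hb) htend
  rw [this]; ring

lemma mymul_exp_neg_le (t : ℝ) : t * Real.exp (-t) ≤ Real.exp (-1) := by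
  have h := Real.add_one_le_exp (t - 1)
  calc t * Real.exp (-t) ≤ Real.exp (t - 1) * Real.exp (-t) :=
        mul_le_mul_of_nonneg_right (by linarith) (Real.exp_pos _).le
    _ = Real.exp (-1) := by rw [← Real.exp_add]; ring_nf

/-- Lemma 5.2 (low order rate): for a `C₀`-semigroup `(T(q))_{q≥0}` with
`‖T(q)‖ ≤ C e^{ωq}`, companion operators `(S_β)` with `‖S_β T(q)‖ ≤ c β^q` for
`q ∈ [0,p₀]`, and `u = ∫₀^∞ e^{−λq} T(q) w dq` with `λ > ω`, one has, for every
`0 ≤ p < p₀`, a bound `‖S_β(T(p)u)‖ ≤ C' β^p / log(1/β)` for all `β ∈ (0,1)`. -/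
theorem low_order_rate_Sbeta
    (X : Type*) [NormedAddCommGroup X] [NormedSpace ℝ X] [CompleteSpace X]
    (T : ℝ → (X →L[ℝ] X))
    (hT0 : T 0 = ContinuousLinearMap.id ℝ X)
    (hTadd : ∀ q₁ q₂ : ℝ, 0 ≤ q₁ → 0 ≤ q₂ → T (q₁ + q₂) = (T q₁).comp (T q₂))
    (hTcont : ∀ w : X, ContinuousOn (fun q => T q w) (Set.Ici (0:ℝ)))
    (C ω : ℝ) (hC : 0 < C) (hω : 0 < ω)
    (hTbound : ∀ q : ℝ, 0 ≤ q → ‖T q‖ ≤ C * Real.exp (ω * q))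
    (p₀ c : ℝ) (hp₀ : 0 < p₀) (hc : 0 < c)
    (S : ℝ → (X →L[ℝ] X))
    (hS : ∀ β ∈ Set.Ioo (0:ℝ) 1, ∀ q ∈ Set.Icc (0:ℝ) p₀, ‖(S β).comp (T q)‖ ≤ c * β ^ q)
    (lam : ℝ) (hlam : ω < lam) (w : X)
    (hint : IntegrableOn (fun q => Real.exp (-lam * q) • T q w) (Set.Ioi (0:ℝ)))
    (u : X) (hu : u = ∫ q in Set.Ioi (0:ℝ), Real.exp (-lam * q) • T q w) :
    ∀ p : ℝ, 0 ≤ p → p < p₀ →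
      ∃ C' > 0, ∀ β ∈ Set.Ioo (0:ℝ) 1,
        ‖S β (T p u)‖ ≤ C' * β ^ p / Real.log (1 / β) := by
  intro p hp hpp
  set δ := p₀ - p with hδdef
  have hδ : 0 < δ := by rw [hδdef]; linarith
  have hlamω : 0 < lam - ω := by linarith
  have hlam0 : 0 < lam := by linarith
  refine ⟨‖w‖ * (c + c * C * Real.exp (-1) / ((lam - ω) * δ)) + 1, by positivity, ?_⟩
  rintro β ⟨hβ0, hβ1⟩
  set L := Real.log (1 / β) with hLdef
  have hL : 0 < L := Real.log_pos (one_lt_one_div hβ0 hβ1)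
  have hlogβ : Real.log β = -L := by
    rw [hLdef, one_div, Real.log_inv]; ring
  set A := (S β).comp (T p) with hAdef
  set f : ℝ → X := fun q => Real.exp (-lam * q) • T q w with hfdef
  have hβp : (0:ℝ) < β ^ p := Real.rpow_pos_of_pos hβ0 p
  -- applying the operator inside the integral
  have hAu : S β (T p u) = ∫ q in Set.Ioi (0:ℝ), A (f q) := by
    rw [hu]
    exact (A.integral_comp_comm hint).symm
  have hint1 : IntegrableOn (fun q => A (f q)) (Set.Ioi (0:ℝ)) :=
    A.integrable_comp hint
  have hIoc : IntegrableOn (fun q => A (f q)) (Set.Ioc 0 δ) :=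
    hint1.mono_set Set.Ioc_subset_Ioi_self
  have hIoi : IntegrableOn (fun q => A (f q)) (Set.Ioi δ) :=
    hint1.mono_set (Set.Ioi_subset_Ioi hδ.le)
  have hsplit : (∫ q in Set.Ioi (0:ℝ), A (f q)) =
      (∫ q in Set.Ioc 0 δ, A (f q)) + ∫ q in Set.Ioi δ, A (f q) := by
    rw [← MeasureTheory.setIntegral_union (Set.Ioc_disjoint_Ioi le_rfl)
      measurableSet_Ioi hIoc hIoi, Set.Ioc_union_Ioi_eq_Ioi hδ.le]
  -- pointwise bound on (0, δ]
  have hb1 : ∀ q ∈ Set.Ioc (0:ℝ) δ,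
      ‖A (f q)‖ ≤ (c * β ^ p * ‖w‖) * Real.exp (-(lam + L) * q) := by
    intro q hq
    have hq0 : 0 < q := hq.1
    have hAf : A (f q) = Real.exp (-lam * q) • (((S β).comp (T (p + q))) w) := by
      show A (Real.exp (-lam * q) • T q w) = _
      rw [A.map_smul]
      congr 1
      show S β (T p (T q w)) = S β (T (p + q) w)
      rw [hTadd p q hp hq0.le]
      rfl
    rw [hAf, norm_smul, Real.norm_eq_abs, abs_of_pos (Real.exp_pos _)]
    have h1 : ‖((S β).comp (T (p + q))) w‖ ≤ (c * β ^ (p + q)) * ‖w‖ := by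
      calc ‖((S β).comp (T (p + q))) w‖ ≤ ‖(S β).comp (T (p + q))‖ * ‖w‖ :=
            ContinuousLinearMap.le_opNorm _ _
        _ ≤ (c * β ^ (p + q)) * ‖w‖ := by
            apply mul_le_mul_of_nonneg_right _ (norm_nonneg _)
            exact hS β ⟨hβ0, hβ1⟩ (p + q) ⟨by linarith, by have := hq.2; rw [hδdef] at this; linarith⟩
    calc Real.exp (-lam * q) * ‖((S β).comp (T (p + q))) w‖
        ≤ Real.exp (-lam * q) * ((c * β ^ (p + q)) * ‖w‖) :=
          mul_le_mul_of_nonneg_left h1 (Real.exp_pos _).le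
      _ = (c * β ^ p * ‖w‖) * Real.exp (-(lam + L) * q) := by
          rw [Real.rpow_add hβ0, Real.rpow_def_of_pos hβ0 q, hlogβ,
            show -(lam + L) * q = -lam * q + -L * q by ring, Real.exp_add]
          ring
  -- pointwise bound on (δ, ∞)
  have hb2 : ∀ q ∈ Set.Ioi δ,
      ‖A (f q)‖ ≤ (c * β ^ p₀ * C * ‖w‖ * Real.exp (-ω * δ)) *
        Real.exp (-(lam - ω) * q) := by
    intro q hq
    have hqδ : δ < q := hq
    have hq0 : 0 < q := lt_trans hδ hqδ
    have hAf : A (f q) = Real.exp (-lam * q) •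
        (((S β).comp (T p₀)) (T (q - δ) w)) := by
      show A (Real.exp (-lam * q) • T q w) = _
      rw [A.map_smul]
      congr 1
      show S β (T p (T q w)) = S β (T p₀ (T (q - δ) w))
      have h1 : T p (T q w) = T (p + q) w := by rw [hTadd p q hp hq0.le]; rfl
      have h2 : (p : ℝ) + q = p₀ + (q - δ) := by rw [hδdef]; ring
      have h3 : T (p + q) = (T p₀).comp (T (q - δ)) := by
        rw [h2, hTadd p₀ (q - δ) hp₀.le (by linarith)]
      rw [h1, h3]; rfl
    rw [hAf, norm_smul, Real.norm_eq_abs, abs_of_pos (Real.exp_pos _)]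
    have h1 : ‖((S β).comp (T p₀)) (T (q - δ) w)‖ ≤
        (c * β ^ p₀) * (C * Real.exp (ω * (q - δ)) * ‖w‖) := by
      calc ‖((S β).comp (T p₀)) (T (q - δ) w)‖
          ≤ ‖(S β).comp (T p₀)‖ * ‖T (q - δ) w‖ := ContinuousLinearMap.le_opNorm _ _
        _ ≤ (c * β ^ p₀) * (C * Real.exp (ω * (q - δ)) * ‖w‖) := by
            apply mul_le_mul (hS β ⟨hβ0, hβ1⟩ p₀ ⟨hp₀.le, le_rfl⟩)
            · calc ‖T (q - δ) w‖ ≤ ‖T (q - δ)‖ * ‖w‖ := ContinuousLinearMap.le_opNorm _ _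
                _ ≤ C * Real.exp (ω * (q - δ)) * ‖w‖ :=
                  mul_le_mul_of_nonneg_right (hTbound (q - δ) (by linarith)) (norm_nonneg _)
            · exact norm_nonneg _
            · positivity
    calc Real.exp (-lam * q) * ‖((S β).comp (T p₀)) (T (q - δ) w)‖
        ≤ Real.exp (-lam * q) * ((c * β ^ p₀) * (C * Real.exp (ω * (q - δ)) * ‖w‖)) :=
          mul_le_mul_of_nonneg_left h1 (Real.exp_pos _).le
      _ = (c * β ^ p₀ * C * ‖w‖ * Real.exp (-ω * δ)) * Real.exp (-(lam - ω) * q) := by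
          rw [show ω * (q - δ) = ω * q + -ω * δ by ring, Real.exp_add,
            show -(lam - ω) * q = -lam * q + ω * q by ring, Real.exp_add]
          ring
  -- bound on the first integral
  have hI1 : ‖∫ q in Set.Ioc 0 δ, A (f q)‖ ≤ c * β ^ p * ‖w‖ / L := by
    have hintb : IntegrableOn (fun q => (c * β ^ p * ‖w‖) * Real.exp (-(lam + L) * q))
        (Set.Ioi (0:ℝ)) := (exp_neg_integrableOn_Ioi 0 (by linarith)).const_mul _
    calc ‖∫ q in Set.Ioc 0 δ, A (f q)‖ ≤ ∫ q in Set.Ioc 0 δ, ‖A (f q)‖ :=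
          norm_integral_le_integral_norm _
      _ ≤ ∫ q in Set.Ioc 0 δ, (c * β ^ p * ‖w‖) * Real.exp (-(lam + L) * q) :=
          setIntegral_mono_on hIoc.norm (hintb.mono_set Set.Ioc_subset_Ioi_self)
            measurableSet_Ioc hb1
      _ ≤ ∫ q in Set.Ioi 0, (c * β ^ p * ‖w‖) * Real.exp (-(lam + L) * q) := by
          apply setIntegral_mono_set hintb
          · filter_upwards with x using by positivity
          · exact HasSubset.Subset.eventuallyLE Set.Ioc_subset_Ioi_self
      _ = (c * β ^ p * ‖w‖) * (Real.exp (-(lam + L) * 0) / (lam + L)) := by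
          rw [integral_const_mul, myexp_integral_Ioi 0 (by linarith)]
      _ = (c * β ^ p * ‖w‖) / (lam + L) := by rw [mul_zero, Real.exp_zero]; ring
      _ ≤ c * β ^ p * ‖w‖ / L :=
          div_le_div_of_nonneg_left (by positivity) hL (by linarith)
  -- bound on the second integral
  have hβδ : β ^ δ ≤ Real.exp (-1) / (δ * L) := by
    have h1 : β ^ δ = Real.exp (-(δ * L)) := by
      rw [Real.rpow_def_of_pos hβ0, hlogβ]; ring_nf
    have h2 := mymul_exp_neg_le (δ * L)
    rw [h1, le_div_iff₀ (by positivity), mul_comm]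
    exact h2
  have hI2 : ‖∫ q in Set.Ioi δ, A (f q)‖ ≤
      (c * C * ‖w‖ * Real.exp (-1) / ((lam - ω) * δ)) * β ^ p / L := by
    have hintb2 : IntegrableOn
        (fun q => (c * β ^ p₀ * C * ‖w‖ * Real.exp (-ω * δ)) * Real.exp (-(lam - ω) * q))
        (Set.Ioi δ) := (exp_neg_integrableOn_Ioi δ hlamω).const_mul _
    calc ‖∫ q in Set.Ioi δ, A (f q)‖ ≤ ∫ q in Set.Ioi δ, ‖A (f q)‖ :=
          norm_integral_le_integral_norm _
      _ ≤ ∫ q in Set.Ioi δ, (c * β ^ p₀ * C * ‖w‖ * Real.exp (-ω * δ)) *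
            Real.exp (-(lam - ω) * q) :=
          setIntegral_mono_on hIoi.norm hintb2 measurableSet_Ioi hb2
      _ = (c * β ^ p₀ * C * ‖w‖ * Real.exp (-ω * δ)) *
            (Real.exp (-(lam - ω) * δ) / (lam - ω)) := by
          rw [integral_const_mul, myexp_integral_Ioi δ hlamω]
      _ = (c * C * ‖w‖ / (lam - ω)) * β ^ p₀ *
            (Real.exp (-ω * δ) * Real.exp (-(lam - ω) * δ)) := by ring
      _ = (c * C * ‖w‖ / (lam - ω)) * β ^ p₀ * Real.exp (-lam * δ) := by
          rw [← Real.exp_add]; congr 1; ring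
      _ ≤ (c * C * ‖w‖ / (lam - ω)) * β ^ p₀ * 1 := by
          apply mul_le_mul_of_nonneg_left _ (by positivity)
          rw [← Real.exp_zero]
          exact Real.exp_le_exp.mpr (by nlinarith)
      _ = (c * C * ‖w‖ / (lam - ω)) * (β ^ p * β ^ δ) := by
          rw [mul_one, ← Real.rpow_add hβ0]
          congr 2
          rw [hδdef]; ring
      _ ≤ (c * C * ‖w‖ / (lam - ω)) * (β ^ p * (Real.exp (-1) / (δ * L))) := by
          apply mul_le_mul_of_nonneg_left _ (by positivity)
          exact mul_le_mul_of_nonneg_left hβδ (by positivity)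
      _ = (c * C * ‖w‖ * Real.exp (-1) / ((lam - ω) * δ)) * β ^ p / L := by
          field_simp
  -- assemble
  rw [hAu, hsplit]
  calc ‖(∫ q in Set.Ioc 0 δ, A (f q)) + ∫ q in Set.Ioi δ, A (f q)‖
      ≤ ‖∫ q in Set.Ioc 0 δ, A (f q)‖ + ‖∫ q in Set.Ioi δ, A (f q)‖ := norm_add_le _ _
    _ ≤ c * β ^ p * ‖w‖ / L +
        (c * C * ‖w‖ * Real.exp (-1) / ((lam - ω) * δ)) * β ^ p / L :=
        add_le_add hI1 hI2
    _ = (c * ‖w‖ + c * C * ‖w‖ * Real.exp (-1) / ((lam - ω) * δ)) * β ^ p / L := by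
        ring
    _ ≤ (‖w‖ * (c + c * C * Real.exp (-1) / ((lam - ω) * δ)) + 1) * β ^ p / L := by
        apply div_le_div_of_nonneg_right _ hL.le
        apply mul_le_mul_of_nonneg_right _ hβp.le
        have heq : c * ‖w‖ + c * C * ‖w‖ * Real.exp (-1) / ((lam - ω) * δ) =
            ‖w‖ * (c + c * C * Real.exp (-1) / ((lam - ω) * δ)) := by ring
        rw [heq]
        linarith
end

section
/- Suppose λ > ω, w ∈ X, and set u := ∫₀^∞ e^{−λq} T(q) w dq (a convergent Bochner integral). Then there exist β₀ ∈ (0,1) and a finite constant C' > 0 such that ‖R_β u‖ ≤ C' / (β log(1/β)) for all β ∈ (0, β₀]. -/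
open Filter Set Topology MeasureTheory

set_option maxHeartbeats 1000000 in
/-- Lemma 5.3 (low order rate for `R_β`): for a `C₀`-semigroup `(T(q))_{q≥0}` with
`‖T(q)‖ ≤ C e^{ωq}`, regularizing operators `(R_β)` with `‖R_β T(q)‖ ≤ c β^{q−1}` for
`q ∈ [0,1]`, and `u = ∫₀^∞ e^{−λq} T(q) w dq` with `λ > ω`, there are `β₀ ∈ (0,1)` and
`C' > 0` with `‖R_β u‖ ≤ C' / (β log(1/β))` for all `β ∈ (0,β₀]`. -/
theorem low_order_rate_Rbeta
    (X : Type*) [NormedAddCommGroup X] [NormedSpace ℝ X] [CompleteSpace X]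
    (T : ℝ → (X →L[ℝ] X))
    (hT0 : T 0 = ContinuousLinearMap.id ℝ X)
    (hTadd : ∀ q₁ q₂ : ℝ, 0 ≤ q₁ → 0 ≤ q₂ → T (q₁ + q₂) = (T q₁).comp (T q₂))
    (hTcont : ∀ w : X, ContinuousOn (fun q => T q w) (Set.Ici (0:ℝ)))
    (C ω : ℝ) (hC : 0 < C) (hω : 0 < ω)
    (hTbound : ∀ q : ℝ, 0 ≤ q → ‖T q‖ ≤ C * Real.exp (ω * q))
    (c : ℝ) (hc : 0 < c)
    (R : ℝ → (X →L[ℝ] X))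
    (hR : ∀ β ∈ Set.Ioo (0:ℝ) 1, ∀ q ∈ Set.Icc (0:ℝ) 1, ‖(R β).comp (T q)‖ ≤ c * β ^ (q - 1))
    (lam : ℝ) (hlam : ω < lam) (w : X)
    (hint : IntegrableOn (fun q => Real.exp (-lam * q) • T q w) (Set.Ioi (0:ℝ)))
    (u : X) (hu : u = ∫ q in Set.Ioi (0:ℝ), Real.exp (-lam * q) • T q w) :
    ∃ β₀ ∈ Set.Ioo (0:ℝ) 1, ∃ C' > 0, ∀ β ∈ Set.Ioc (0:ℝ) β₀,
      ‖R β u‖ ≤ C' / (β * Real.log (1 / β)) := by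
  -- tail constant
  set K : ℝ := c * C * Real.exp (-ω) * ‖w‖ with hK
  have hK0 : 0 ≤ K := by positivity
  set B : ℝ := ∫ q in Set.Ioi (1:ℝ), K * Real.exp ((ω - lam) * q) with hB
  have hB0 : 0 ≤ B := by
    apply setIntegral_nonneg measurableSet_Ioi
    intro q _
    positivity
  -- integrability of the tail bound
  have htail_int : IntegrableOn (fun q => K * Real.exp ((ω - lam) * q)) (Set.Ioi (1:ℝ)) := by
    have h1 : IntegrableOn (fun q => Real.exp (-(lam - ω) * q)) (Set.Ioi (1:ℝ)) :=
      exp_neg_integrableOn_Ioi 1 (by linarith)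
    have h2 := h1.const_mul K
    have : (fun q => K * Real.exp (-(lam - ω) * q)) = fun q => K * Real.exp ((ω - lam) * q) := by
      funext q; ring_nf
    rwa [this] at h2
  refine ⟨Real.exp (-1), ⟨Real.exp_pos _, Real.exp_lt_one_iff.2 (by norm_num)⟩,
    c * ‖w‖ + B + 1, by positivity, ?_⟩
  intro β hβ
  have hβ0 : 0 < β := hβ.1
  have hβ1 : β < 1 := lt_of_le_of_lt hβ.2 (Real.exp_lt_one_iff.2 (by norm_num))
  set L : ℝ := Real.log β with hLdef
  have hL : L < 0 := Real.log_neg hβ0 hβ1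
  have hLne : L ≠ 0 := ne_of_lt hL
  set M : ℝ := Real.log (1 / β) with hMdef
  have hML : M = -L := by rw [hMdef, hLdef, one_div, Real.log_inv]
  have hM0 : 0 < M := by rw [hML]; linarith
  have hexpL : Real.exp (-L) = 1 / β := by
    rw [hLdef, Real.exp_neg, Real.exp_log hβ0, one_div]
  -- the function after applying R β
  set F : ℝ → X := fun q => Real.exp (-lam * q) • (R β) (T q w) with hFdef
  have hFR : F = fun q => (R β) (Real.exp (-lam * q) • T q w) := by
    funext q; simp [hFdef, _root_.map_smul]
  have hFint : IntegrableOn F (Set.Ioi (0:ℝ)) := by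
    rw [hFR]; exact (R β).integrable_comp hint
  have hRu : (R β) u = ∫ q in Set.Ioi (0:ℝ), F q := by
    rw [hu, ← ContinuousLinearMap.integral_comp_comm _ hint, hFR]
  -- split the integral
  have hsplit : (∫ q in Set.Ioi (0:ℝ), F q)
      = (∫ q in Set.Ioc (0:ℝ) 1, F q) + ∫ q in Set.Ioi (1:ℝ), F q := by
    rw [← setIntegral_union (Set.Ioc_disjoint_Ioi le_rfl) measurableSet_Ioi
      (hFint.mono_set (by intro x hx; exact hx.1)) (hFint.mono_set (by
        intro x hx; exact lt_trans one_pos (Set.mem_Ioi.mp hx))),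
      Set.Ioc_union_Ioi_eq_Ioi zero_le_one]
  -- pointwise bound on (0,1]
  have hbd1 : ∀ q ∈ Set.Ioc (0:ℝ) 1, ‖F q‖ ≤ c * ‖w‖ * Real.exp (L * (q - 1)) := by
    intro q hq
    have hq0 : 0 ≤ q := le_of_lt hq.1
    have h1 : ‖F q‖ = Real.exp (-lam * q) * ‖(R β) (T q w)‖ := by
      rw [hFdef]; simp [norm_smul, Real.abs_exp]
    have h2 : ‖(R β) (T q w)‖ ≤ c * β ^ (q - 1) * ‖w‖ := by
      have := ((R β).comp (T q)).le_opNorm w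
      calc ‖(R β) (T q w)‖ = ‖((R β).comp (T q)) w‖ := rfl
        _ ≤ ‖(R β).comp (T q)‖ * ‖w‖ := ((R β).comp (T q)).le_opNorm w
        _ ≤ c * β ^ (q - 1) * ‖w‖ := by
            apply mul_le_mul_of_nonneg_right _ (norm_nonneg w)
            exact hR β ⟨hβ0, hβ1⟩ q ⟨hq0, hq.2⟩
    have hexp1 : Real.exp (-lam * q) ≤ 1 := by
      apply Real.exp_le_one_iff.2
      nlinarith
    have hrpow : (β : ℝ) ^ (q - 1) = Real.exp (L * (q - 1)) := by
      rw [Real.rpow_def_of_pos hβ0, hLdef]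
    calc ‖F q‖ = Real.exp (-lam * q) * ‖(R β) (T q w)‖ := h1
      _ ≤ 1 * (c * β ^ (q - 1) * ‖w‖) := by
          apply mul_le_mul hexp1 h2 (norm_nonneg _) zero_le_one
      _ = c * ‖w‖ * Real.exp (L * (q - 1)) := by rw [hrpow]; ring
  -- pointwise bound on (1, ∞)
  have hbd2 : ∀ q ∈ Set.Ioi (1:ℝ), ‖F q‖ ≤ K * Real.exp ((ω - lam) * q) := by
    intro q hq
    have hq1 : (1:ℝ) < q := hq
    have hTq : T q = (T 1).comp (T (q - 1)) := by
      have := hTadd 1 (q - 1) zero_le_one (by linarith)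
      rwa [show (1:ℝ) + (q - 1) = q by ring] at this
    have hR1 : ‖(R β).comp (T 1)‖ ≤ c := by
      have := hR β ⟨hβ0, hβ1⟩ 1 ⟨zero_le_one, le_rfl⟩
      simpa [Real.rpow_zero] using this
    have hT1 : ‖T (q - 1) w‖ ≤ C * Real.exp (ω * (q - 1)) * ‖w‖ := by
      calc ‖T (q - 1) w‖ ≤ ‖T (q - 1)‖ * ‖w‖ := (T (q - 1)).le_opNorm w
        _ ≤ C * Real.exp (ω * (q - 1)) * ‖w‖ :=
            mul_le_mul_of_nonneg_right (hTbound _ (by linarith)) (norm_nonneg w)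
    have h2 : ‖(R β) (T q w)‖ ≤ c * (C * Real.exp (ω * (q - 1)) * ‖w‖) := by
      have : (R β) (T q w) = ((R β).comp (T 1)) (T (q - 1) w) := by
        rw [hTq]; rfl
      rw [this]
      calc ‖((R β).comp (T 1)) (T (q - 1) w)‖
          ≤ ‖(R β).comp (T 1)‖ * ‖T (q - 1) w‖ := ContinuousLinearMap.le_opNorm _ _
        _ ≤ c * (C * Real.exp (ω * (q - 1)) * ‖w‖) := by
            apply mul_le_mul hR1 hT1 (norm_nonneg _) (le_of_lt hc)
    have h1 : ‖F q‖ = Real.exp (-lam * q) * ‖(R β) (T q w)‖ := by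
      rw [hFdef]; simp [norm_smul, Real.abs_exp]
    have hexpeq : Real.exp (-lam * q) * (c * (C * Real.exp (ω * (q - 1)) * ‖w‖))
        = K * Real.exp ((ω - lam) * q) := by
      rw [hK]
      rw [show Real.exp (-lam * q) * (c * (C * Real.exp (ω * (q - 1)) * ‖w‖))
        = c * C * ‖w‖ * (Real.exp (-lam * q) * Real.exp (ω * (q - 1))) by ring,
        ← Real.exp_add,
        show c * C * Real.exp (-ω) * ‖w‖ * Real.exp ((ω - lam) * q)
        = c * C * ‖w‖ * (Real.exp (-ω) * Real.exp ((ω - lam) * q)) by ring,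
        ← Real.exp_add]
      ring_nf
    calc ‖F q‖ = Real.exp (-lam * q) * ‖(R β) (T q w)‖ := h1
      _ ≤ Real.exp (-lam * q) * (c * (C * Real.exp (ω * (q - 1)) * ‖w‖)) := by
          apply mul_le_mul_of_nonneg_left h2 (le_of_lt (Real.exp_pos _))
      _ = K * Real.exp ((ω - lam) * q) := hexpeq
  -- integrability of the bound on (0,1]
  have hg1int : IntegrableOn (fun q => c * ‖w‖ * Real.exp (L * (q - 1))) (Set.Ioc (0:ℝ) 1) := by
    apply Continuous.integrableOn_Ioc
    exact continuous_const.mul (Real.continuous_exp.comp (continuous_const.mul (continuous_id.sub continuous_const)))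
  -- the key integral computation
  have hkey : ∫ q in (0:ℝ)..1, Real.exp (L * (q - 1)) = (1 - Real.exp (-L)) / L := by
    have hderiv : ∀ x ∈ Set.uIcc (0:ℝ) 1,
        HasDerivAt (fun y => Real.exp (L * (y - 1)) / L) (Real.exp (L * (x - 1))) x := by
      intro x _
      have h1 : HasDerivAt (fun y : ℝ => L * (y - 1)) L x := by
        simpa using ((hasDerivAt_id x).sub_const 1).const_mul L
      have h2 := (h1.exp).div_const L
      rwa [mul_div_cancel_right₀ _ hLne] at h2
    have hcont : IntervalIntegrable (fun x => Real.exp (L * (x - 1))) volume 0 1 := by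
      exact (Real.continuous_exp.comp (continuous_const.mul (continuous_id.sub continuous_const))).intervalIntegrable _ _
    rw [intervalIntegral.integral_eq_sub_of_hasDerivAt hderiv hcont]
    simp only [sub_self, mul_zero, Real.exp_zero]
    rw [show L * ((0:ℝ) - 1) = -L by ring]
    ring
  have hIoc : ∫ q in Set.Ioc (0:ℝ) 1, c * ‖w‖ * Real.exp (L * (q - 1))
      = c * ‖w‖ * ((1/β - 1) / M) := by
    rw [← intervalIntegral.integral_of_le zero_le_one,
      intervalIntegral.integral_const_mul, hkey, hexpL, hML]
    rw [show (1 - 1/β) / L = (1/β - 1) / (-L) by rw [div_neg, ← neg_div]; ring_nf]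
  -- bound piece 1
  have hp1 : ‖∫ q in Set.Ioc (0:ℝ) 1, F q‖ ≤ c * ‖w‖ * ((1/β - 1) / M) := by
    rw [← hIoc]
    apply norm_integral_le_of_norm_le hg1int
    exact (ae_restrict_iff' measurableSet_Ioc).2 (Filter.Eventually.of_forall hbd1)
  -- bound piece 2
  have hp2 : ‖∫ q in Set.Ioi (1:ℝ), F q‖ ≤ B := by
    rw [hB]
    apply norm_integral_le_of_norm_le htail_int
    exact (ae_restrict_iff' measurableSet_Ioi).2 (Filter.Eventually.of_forall hbd2)
  -- combine
  have htotal : ‖(R β) u‖ ≤ c * ‖w‖ * ((1/β - 1) / M) + B := by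
    rw [hRu, hsplit]
    exact le_trans (norm_add_le _ _) (add_le_add hp1 hp2)
  -- β * M ≤ 1
  have hβM : β * M ≤ 1 := by
    have h1 : M ≤ 1/β - 1 := by
      rw [hMdef]
      have := Real.log_le_sub_one_of_pos (show (0:ℝ) < 1/β by positivity)
      linarith
    have h2 : β * (1/β - 1) = 1 - β := by field_simp
    nlinarith [mul_le_mul_of_nonneg_left h1 (le_of_lt hβ0)]
  have hD : 0 < β * M := by positivity
  refine le_trans htotal ?_
  rw [le_div_iff₀ hD]
  have hid : c * ‖w‖ * ((1/β - 1) / M) * (β * M) = c * ‖w‖ * (1 - β) := by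
    field_simp
  have hcw : 0 ≤ c * ‖w‖ := by positivity
  rw [add_mul, hid]
  nlinarith [mul_le_mul_of_nonneg_left hβM hB0]
end

section
/- Assume the Hölder smoothness u† − ū ∈ range(G). Then there exist α₀ > 0 and a finite constant C > 0 such that for every α ∈ (0, α₀], every δ > 0, every data f^δ with ‖f^δ − f†‖ ≤ δ, and every minimizer u_α^δ of T_α^δ over D, one has max{ ‖F(u_α^δ) − f^δ‖ , α^{1/r} ‖G^{-1}(u_α^δ − ū)‖ } ≤ C α^{1/r} + e_r δ, where e_r := 1 if r ≥ 1 and e_r := 2^{−1+1/r} if 0 < r < 1. -/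
open Filter Set Topology

lemma aux_rpow_sum_le {r : ℝ} (hr : 0 < r) {a b : ℝ} (ha : 0 ≤ a) (hb : 0 ≤ b) :
    (a ^ r + b ^ r) ^ (1 / r) ≤
      (if 1 ≤ r then (1:ℝ) else (2:ℝ) ^ (-1 + 1 / r)) * (a + b) := by
  by_cases h1 : 1 ≤ r
  · rw [if_pos h1, one_mul]
    have h := NNReal.rpow_add_rpow_le_add a.toNNReal b.toNNReal h1
    have h' := NNReal.coe_le_coe.mpr h
    push_cast at h'
    rwa [Real.coe_toNNReal a ha, Real.coe_toNNReal b hb] at h'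
  · rw [if_neg h1]
    have hp : 1 ≤ 1 / r := by
      rw [le_div_iff₀ hr]; linarith [not_le.mp h1]
    have h := NNReal.rpow_add_le_mul_rpow_add_rpow (a ^ r).toNNReal (b ^ r).toNNReal hp
    have h' := NNReal.coe_le_coe.mpr h
    push_cast at h'
    rw [Real.coe_toNNReal _ (Real.rpow_nonneg ha r),
      Real.coe_toNNReal _ (Real.rpow_nonneg hb r)] at h'
    have hira : (a ^ r) ^ (1 / r) = a := by
      rw [one_div, Real.rpow_rpow_inv ha hr.ne']
    have hirb : (b ^ r) ^ (1 / r) = b := by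
      rw [one_div, Real.rpow_rpow_inv hb hr.ne']
    rw [hira, hirb] at h'
    calc (a ^ r + b ^ r) ^ (1 / r) ≤ (2:ℝ) ^ (1 / r - 1) * (a + b) := h'
      _ = (2:ℝ) ^ (-1 + 1 / r) * (a + b) := by ring_nf

/-- Lemma 5.4 specialized (Hölder smoothness `p = 1`, degree `a = 1`):
`max{‖F(u_α^δ) − f^δ‖, α^{1/r}‖G^{-1}(u_α^δ − ū)‖} ≤ C α^{1/r} + e_r δ`. -/
theorem misfit_and_penalty_bound_holder
    {X Y : Type*} [NormedAddCommGroup X] [NormedSpace ℝ X] [CompleteSpace X]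
    [NormedAddCommGroup Y] [NormedSpace ℝ Y]
    (G : X →L[ℝ] X) (hGinj : Function.Injective G)
    (κs : ℝ) (hκs : 0 < κs)
    (hpos : ∀ β : ℝ, 0 < β →
      Function.Bijective (G + β • ContinuousLinearMap.id ℝ X) ∧
      ∀ x : X, ‖x‖ ≤ κs / β * ‖(G + β • ContinuousLinearMap.id ℝ X) x‖)
    (F : X → Y) (DF : Set X) (hDFclosed : IsClosed DF) (hFcont : ContinuousOn F DF)
    (D : Set X) (hD : D = DF ∩ Set.range G) (hDne : D.Nonempty)
    (udag : X) (hudag : udag ∈ interior DF) (fdag : Y) (hFudag : F udag = fdag)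
    (ca cb c0 c1 : ℝ) (hca : 0 < ca) (hcacb : ca ≤ cb) (hc0 : 0 < c0) (hc1 : 0 < c1)
    (hfwd : ∀ u ∈ D, ‖G (u - udag)‖ ≤ c0 → ‖F u - fdag‖ ≤ cb * ‖G (u - udag)‖)
    (hinv : ∀ u ∈ D, ‖F u - fdag‖ ≤ c1 → ca * ‖G (u - udag)‖ ≤ ‖F u - fdag‖)
    (r : ℝ) (hr : 0 < r) (ubar : X) (hubar : ubar ∈ Set.range G)
    (T : ℝ → Y → X → ℝ)
    (hT : ∀ (α : ℝ) (fδ : Y), ∀ u ∈ D, ∀ v : X, G v = u - ubar →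
      T α fδ u = ‖F u - fδ‖ ^ r + α * ‖v‖ ^ r)
    (hHolder : udag - ubar ∈ Set.range G) :
    ∃ α₀ > 0, ∃ C > 0, ∀ α ∈ Set.Ioc (0:ℝ) α₀, ∀ δ : ℝ, 0 < δ →
      ∀ fδ : Y, ‖fδ - fdag‖ ≤ δ →
      ∀ u ∈ D, (∀ u' ∈ D, T α fδ u ≤ T α fδ u') →
      ∀ v : X, G v = u - ubar →
        max ‖F u - fδ‖ (α ^ (1 / r) * ‖v‖) ≤
          C * α ^ (1 / r) + (if 1 ≤ r then (1:ℝ) else (2:ℝ) ^ (-1 + 1 / r)) * δ := by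
  obtain ⟨w, hw⟩ := hHolder
  obtain ⟨b, hb⟩ := hubar
  set e : ℝ := if 1 ≤ r then (1:ℝ) else (2:ℝ) ^ (-1 + 1 / r) with he_def
  have he : 0 < e := by
    rw [he_def]; split
    · exact one_pos
    · positivity
  refine ⟨1, one_pos, e * (‖w‖ + 1), by positivity, ?_⟩
  intro α hα δ hδ fδ hfδ u hu hmin v hv
  have hαpos : 0 < α := hα.1
  have hudagD : udag ∈ D := by
    rw [hD]
    refine ⟨interior_subset hudag, ⟨b + w, ?_⟩⟩
    rw [map_add, hb, hw]; abel
  have hmin' := hmin udag hudagD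
  rw [hT α fδ u hu v hv, hT α fδ udag hudagD w hw] at hmin'
  have hdd : ‖F udag - fδ‖ ≤ δ := by
    rw [hFudag, ← norm_neg]; simpa [norm_sub_rev] using hfδ
  have hδr : ‖F udag - fδ‖ ^ r ≤ δ ^ r :=
    Real.rpow_le_rpow (norm_nonneg _) hdd hr.le
  set S : ℝ := δ ^ r + α * ‖w‖ ^ r with hS_def
  have hkey : ∀ x : ℝ, 0 ≤ x → x ^ r ≤ S → x ≤ S ^ (1 / r) := by
    intro x hx hxS
    have := Real.rpow_le_rpow (Real.rpow_nonneg hx r) hxS (by positivity : (0:ℝ) ≤ 1 / r)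
    calc x = (x ^ r) ^ (1 / r) := by rw [one_div, Real.rpow_rpow_inv hx hr.ne']
      _ ≤ S ^ (1 / r) := this
  have hvr : (α ^ (1 / r) * ‖v‖) ^ r = α * ‖v‖ ^ r := by
    rw [Real.mul_rpow (Real.rpow_nonneg hαpos.le _) (norm_nonneg _),
      ← Real.rpow_mul hαpos.le, one_div, inv_mul_cancel₀ hr.ne', Real.rpow_one]
  have hwr : (α ^ (1 / r) * ‖w‖) ^ r = α * ‖w‖ ^ r := by
    rw [Real.mul_rpow (Real.rpow_nonneg hαpos.le _) (norm_nonneg _),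
      ← Real.rpow_mul hαpos.le, one_div, inv_mul_cancel₀ hr.ne', Real.rpow_one]
  have hFS : ‖F u - fδ‖ ≤ S ^ (1 / r) := by
    refine hkey _ (norm_nonneg _) ?_
    have hnn : 0 ≤ α * ‖v‖ ^ r := by positivity
    nlinarith
  have hvS : α ^ (1 / r) * ‖v‖ ≤ S ^ (1 / r) := by
    refine hkey _ (by positivity) ?_
    rw [hvr]
    have hnn : 0 ≤ ‖F u - fδ‖ ^ r := Real.rpow_nonneg (norm_nonneg _) r
    nlinarith
  have hSle : S ^ (1 / r) ≤ e * (δ + α ^ (1 / r) * ‖w‖) := by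
    have := aux_rpow_sum_le hr hδ.le (by positivity : (0:ℝ) ≤ α ^ (1 / r) * ‖w‖)
    rwa [hwr, ← hS_def, ← he_def] at this
  have hfinal : e * (δ + α ^ (1 / r) * ‖w‖) ≤ e * (‖w‖ + 1) * α ^ (1 / r) + e * δ := by
    have hαr : 0 ≤ α ^ (1 / r) := Real.rpow_nonneg hαpos.le _
    nlinarith [he.le]
  exact max_le (hFS.trans (hSle.trans hfinal)) (hvS.trans (hSle.trans hfinal))
end

section
/- Assume the Hölder smoothness u† − ū ∈ range(G). Then there exist α₀ > 0, δ₀ > 0 and finite constants C, K₂ > 0 such that for every α ∈ (0, α₀], every δ ∈ [0, δ₀], every data f^δ with ‖f^δ − f†‖ ≤ δ, and every minimizer u_α^δ of T_α^δ over D, one has ‖G(u_α^δ − u†)‖ ≤ C α^{1/r} + K₂ δ. -/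
open Filter Set Topology

private lemma rpow_add_le_aux {a b r : ℝ} (ha : 0 ≤ a) (hb : 0 ≤ b) (hr : 0 < r) :
    (a ^ r + b ^ r) ^ (1 / r) ≤ 2 ^ (1 / r) * (a + b) := by
  have hab : (0:ℝ) ≤ a + b := by linarith
  have h1 : a ^ r ≤ (a + b) ^ r := Real.rpow_le_rpow ha (by linarith) hr.le
  have h2 : b ^ r ≤ (a + b) ^ r := Real.rpow_le_rpow hb (by linarith) hr.le
  have hsum : a ^ r + b ^ r ≤ 2 * (a + b) ^ r := by linarith
  have hnn : (0:ℝ) ≤ a ^ r + b ^ r := by positivity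
  have := Real.rpow_le_rpow hnn hsum (by positivity : (0:ℝ) ≤ 1 / r)
  calc (a ^ r + b ^ r) ^ (1 / r) ≤ (2 * (a + b) ^ r) ^ (1 / r) := this
    _ = 2 ^ (1 / r) * ((a + b) ^ r) ^ (1 / r) := by
        rw [Real.mul_rpow (by norm_num) (by positivity)]
    _ = 2 ^ (1 / r) * (a + b) := by
        rw [one_div, Real.rpow_rpow_inv hab hr.ne']

/-- Corollary 5.5 specialized (Hölder smoothness `p = 1`, degree `a = 1`):
`‖G(u_α^δ − u†)‖ ≤ C α^{1/r} + K₂ δ`. -/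
theorem Ga_error_bound_holder
    {X Y : Type*} [NormedAddCommGroup X] [NormedSpace ℝ X] [CompleteSpace X]
    [NormedAddCommGroup Y] [NormedSpace ℝ Y]
    (G : X →L[ℝ] X) (hGinj : Function.Injective G)
    (κs : ℝ) (hκs : 0 < κs)
    (hpos : ∀ β : ℝ, 0 < β →
      Function.Bijective (G + β • ContinuousLinearMap.id ℝ X) ∧
      ∀ x : X, ‖x‖ ≤ κs / β * ‖(G + β • ContinuousLinearMap.id ℝ X) x‖)
    (F : X → Y) (DF : Set X) (hDFclosed : IsClosed DF) (hFcont : ContinuousOn F DF)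
    (D : Set X) (hD : D = DF ∩ Set.range G) (hDne : D.Nonempty)
    (udag : X) (hudag : udag ∈ interior DF) (fdag : Y) (hFudag : F udag = fdag)
    (ca cb c0 c1 : ℝ) (hca : 0 < ca) (hcacb : ca ≤ cb) (hc0 : 0 < c0) (hc1 : 0 < c1)
    (hfwd : ∀ u ∈ D, ‖G (u - udag)‖ ≤ c0 → ‖F u - fdag‖ ≤ cb * ‖G (u - udag)‖)
    (hinv : ∀ u ∈ D, ‖F u - fdag‖ ≤ c1 → ca * ‖G (u - udag)‖ ≤ ‖F u - fdag‖)
    (r : ℝ) (hr : 0 < r) (ubar : X) (hubar : ubar ∈ Set.range G)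
    (T : ℝ → Y → X → ℝ)
    (hT : ∀ (α : ℝ) (fδ : Y), ∀ u ∈ D, ∀ v : X, G v = u - ubar →
      T α fδ u = ‖F u - fδ‖ ^ r + α * ‖v‖ ^ r)
    (hHolder : udag - ubar ∈ Set.range G) :
    ∃ α₀ > 0, ∃ δ₀ > 0, ∃ C > 0, ∃ K₂ > 0,
      ∀ α ∈ Set.Ioc (0:ℝ) α₀, ∀ δ ∈ Set.Icc (0:ℝ) δ₀,
      ∀ fδ : Y, ‖fδ - fdag‖ ≤ δ →
      ∀ u ∈ D, (∀ u' ∈ D, T α fδ u ≤ T α fδ u') →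
        ‖G (u - udag)‖ ≤ C * α ^ (1 / r) + K₂ * δ := by
  obtain ⟨w, hw⟩ := hHolder
  obtain ⟨y, hy⟩ := hubar
  set M : ℝ := 2 ^ (1 / r) with hM
  have hMpos : 0 < M := Real.rpow_pos_of_pos (by norm_num) _
  have hM1 : 1 ≤ M := Real.one_le_rpow (by norm_num) (by positivity)
  set W : ℝ := ‖w‖ with hW
  have hWnn : 0 ≤ W := norm_nonneg w
  -- udag ∈ D
  have hudagD : udag ∈ D := by
    rw [hD]
    refine ⟨interior_subset hudag, ⟨w + y, ?_⟩⟩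
    rw [map_add, hw, hy]; abel
  -- choose constants
  refine ⟨(c1 / (2 * M * (W + 1))) ^ r, by positivity, c1 / (2 * (M + 1)), by positivity,
    M * (W + 1) / ca, by positivity, (M + 1) / ca, by positivity, ?_⟩
  rintro α ⟨hα0, hα1⟩ δ ⟨hδ0, hδ1⟩ fδ hfδ u huD hmin
  -- v with G v = u - ubar
  obtain ⟨hUDF, x, hx⟩ : u ∈ DF ∧ ∃ x, G x = u := by rwa [hD] at huD
  have hv : G (x - y) = u - ubar := by rw [map_sub, hx, hy]
  -- minimality at udag
  have hTu := hT α fδ u huD (x - y) hv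
  have hTdag := hT α fδ udag hudagD w hw
  have hmin' := hmin udag hudagD
  -- ‖F u - fδ‖ ^ r ≤ δ ^ r + α * W ^ r
  have hδr : ‖fdag - fδ‖ ^ r ≤ δ ^ r := by
    apply Real.rpow_le_rpow (norm_nonneg _) _ hr.le
    rw [← norm_neg]; simpa using hfδ
  have hvnn : 0 ≤ α * ‖x - y‖ ^ r := by positivity
  have key : ‖F u - fδ‖ ^ r ≤ δ ^ r + α * W ^ r := by
    rw [hTu, hTdag, hFudag] at hmin'
    nlinarith [hmin', hδr, hvnn]
  -- take rpow (1/r)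
  have hα1r : (0:ℝ) ≤ α := hα0.le
  have hres : ‖F u - fδ‖ ≤ M * (δ + α ^ (1/r) * W) := by
    have h1 : ‖F u - fδ‖ = (‖F u - fδ‖ ^ r) ^ (1/r) := by
      rw [one_div, Real.rpow_rpow_inv (norm_nonneg _) hr.ne']
    have h2 : (‖F u - fδ‖ ^ r) ^ (1/r) ≤ (δ ^ r + α * W ^ r) ^ (1/r) :=
      Real.rpow_le_rpow (by positivity) key (by positivity)
    have h3 : α * W ^ r = (α ^ (1/r) * W) ^ r := by
      rw [Real.mul_rpow (by positivity) hWnn, one_div, Real.rpow_inv_rpow hα1r hr.ne']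
    have h4 : (δ ^ r + α * W ^ r) ^ (1/r) ≤ M * (δ + α ^ (1/r) * W) := by
      rw [h3]; exact rpow_add_le_aux hδ0 (by positivity) hr
    linarith [h1 ▸ h2.trans h4]
  -- bound α^(1/r)
  have hαb : α ^ (1/r) ≤ c1 / (2 * M * (W + 1)) := by
    calc α ^ (1/r) ≤ ((c1 / (2 * M * (W + 1))) ^ r) ^ (1/r) :=
          Real.rpow_le_rpow hα1r hα1 (by positivity)
      _ = c1 / (2 * M * (W + 1)) := by
          rw [one_div, Real.rpow_rpow_inv (by positivity) hr.ne']
  -- ‖F u - fdag‖ ≤ c1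
  have htri : ‖F u - fdag‖ ≤ ‖F u - fδ‖ + δ := by
    calc ‖F u - fdag‖ ≤ ‖F u - fδ‖ + ‖fδ - fdag‖ := by
          have := norm_add_le (F u - fδ) (fδ - fdag); simpa using this
      _ ≤ ‖F u - fδ‖ + δ := by linarith
  have hαWb : M * (α ^ (1/r) * W) ≤ c1 / 2 := by
    have h5 : α ^ (1/r) * W ≤ c1 / (2 * M * (W + 1)) * (W + 1) := by
      apply mul_le_mul hαb (by linarith) hWnn (by positivity)
    have h6 : c1 / (2 * M * (W + 1)) * (W + 1) = c1 / (2 * M) := by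
      field_simp
    calc M * (α ^ (1/r) * W) ≤ M * (c1 / (2 * M)) := by
          rw [h6] at h5; exact mul_le_mul_of_nonneg_left h5 hMpos.le
      _ = c1 / 2 := by field_simp
  have hδb : δ + M * δ ≤ c1 / 2 := by
    have : (M + 1) * δ ≤ (M + 1) * (c1 / (2 * (M + 1))) :=
      mul_le_mul_of_nonneg_left hδ1 (by linarith)
    have h7 : (M + 1) * (c1 / (2 * (M + 1))) = c1 / 2 := by field_simp
    nlinarith
  have hexp : M * (δ + α ^ (1/r) * W) = M * δ + M * (α ^ (1/r) * W) := by ring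
  have hFc1 : ‖F u - fdag‖ ≤ c1 := by linarith [htri, hres, hαWb, hδb, hexp]
  -- apply hinv
  have hmain := hinv u huD hFc1
  have hαnn : 0 ≤ α ^ (1/r) := by positivity
  have he2 : M * (W + 1) * α ^ (1/r) = M * (α ^ (1/r) * W) + M * α ^ (1/r) := by ring
  have hfin : ca * ‖G (u - udag)‖ ≤ M * (W + 1) * α ^ (1/r) + (M + 1) * δ := by
    have hMα : 0 ≤ M * α ^ (1/r) := mul_nonneg hMpos.le hαnn
    linarith [hmain, htri, hres, hexp, he2, hMα]
  rw [div_mul_eq_mul_div, div_mul_eq_mul_div, ← add_div, le_div_iff₀ hca]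
  calc ‖G (u - udag)‖ * ca = ca * ‖G (u - udag)‖ := mul_comm _ _
    _ ≤ _ := hfin
end

section
/- Error estimate for regularized solutions under Hölder smoothness: assume u† − ū ∈ range(G). Then there exist α₀ > 0, δ₀ > 0 and finite constants C, K₁ > 0 such that for every α ∈ (0, α₀], every δ ∈ (0, δ₀], every data f^δ with ‖f^δ − f†‖ ≤ δ, and every minimizer u_α^δ of T_α^δ over D, one has ‖u_α^δ − u†‖ ≤ C α^{1/(2r)} + K₁ δ / α^{1/(2r)}. -/
open Filter Set Topology

lemma interp_aux {X : Type*} [NormedAddCommGroup X] [NormedSpace ℝ X]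
    (G : X →L[ℝ] X) (κs : ℝ)
    (hpos : ∀ β : ℝ, 0 < β →
      Function.Bijective (G + β • ContinuousLinearMap.id ℝ X) ∧
      ∀ x : X, ‖x‖ ≤ κs / β * ‖(G + β • ContinuousLinearMap.id ℝ X) x‖)
    (β : ℝ) (hβ : 0 < β) (x : X) :
    ‖G x‖ ≤ κs / β * ‖G (G x)‖ + β * (1 + κs) * ‖x‖ := by
  obtain ⟨hbij, hbd⟩ := hpos β hβ
  set A := G + β • ContinuousLinearMap.id ℝ X with hA
  have hAx : ∀ y : X, A y = G y + β • y := by intro y; simp [hA]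
  obtain ⟨z, hz⟩ := hbij.2 x
  obtain ⟨z₂, hz₂⟩ := hbij.2 (G (G x))
  have hGx : G x = G (G z) + β • G z := by
    rw [← hz, hAx, map_add, map_smul]
  have key : z₂ + β • G z = G x := by
    apply hbij.1
    rw [map_add, map_smul, hz₂, hAx (G z), hAx (G x)]
    rw [hGx, map_add, map_smul]
  have hz2bd : ‖z₂‖ ≤ κs / β * ‖G (G x)‖ := by
    have := hbd z₂; rwa [hz₂] at this
  have hzbd : ‖z‖ ≤ κs / β * ‖x‖ := by
    have := hbd z; rwa [hz] at this
  have hGz : G z = x - β • z := by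
    rw [← hz, hAx]; abel
  have hGzbd : ‖G z‖ ≤ (1 + κs) * ‖x‖ := by
    rw [hGz]
    calc ‖x - β • z‖ ≤ ‖x‖ + ‖β • z‖ := norm_sub_le _ _
      _ = ‖x‖ + β * ‖z‖ := by rw [norm_smul, Real.norm_of_nonneg hβ.le]
      _ ≤ ‖x‖ + β * (κs / β * ‖x‖) := by nlinarith
      _ = (1 + κs) * ‖x‖ := by field_simp
  calc ‖G x‖ = ‖z₂ + β • G z‖ := by rw [key]
    _ ≤ ‖z₂‖ + β * ‖G z‖ := by
        refine (norm_add_le _ _).trans ?_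
        rw [norm_smul, Real.norm_of_nonneg hβ.le]
    _ ≤ κs / β * ‖G (G x)‖ + β * ((1 + κs) * ‖x‖) := by
        refine add_le_add hz2bd (mul_le_mul_of_nonneg_left hGzbd hβ.le)
    _ = κs / β * ‖G (G x)‖ + β * (1 + κs) * ‖x‖ := by ring

lemma rpow_sum_le {r : ℝ} (hr : 0 < r) {a b c : ℝ} (ha : 0 ≤ a) (hb : 0 ≤ b)
    (h : c ^ r ≤ a ^ r + b ^ r) : c ≤ 2 ^ (1/r) * (a + b) := by
  by_contra hlt
  push_neg at hlt
  have hK : (0:ℝ) ≤ 2 ^ (1/r) * (a + b) := by positivity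
  have hstrict : (2 ^ (1/r) * (a + b)) ^ r < c ^ r := Real.rpow_lt_rpow hK hlt hr
  have hKr : ((2:ℝ) ^ (1/r) * (a + b)) ^ r = 2 * (a + b) ^ r := by
    rw [Real.mul_rpow (by positivity) (by positivity), ← Real.rpow_mul (by norm_num)]
    rw [one_div_mul_cancel hr.ne', Real.rpow_one]
  have ha' : a ^ r ≤ (a + b) ^ r := Real.rpow_le_rpow ha (by linarith) hr.le
  have hb' : b ^ r ≤ (a + b) ^ r := Real.rpow_le_rpow hb (by linarith) hr.le
  rw [hKr] at hstrict
  linarith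

set_option maxHeartbeats 1600000 in
/-- Theorem 3.1 specialized (Hölder smoothness `p = 1`, degree `a = 1`, `κ = 1/(2r)`):
error estimate `‖u_α^δ − u†‖ ≤ C α^{1/(2r)} + K₁ δ/α^{1/(2r)}`. -/
theorem error_estimate_holder
    {X Y : Type*} [NormedAddCommGroup X] [NormedSpace ℝ X] [CompleteSpace X]
    [NormedAddCommGroup Y] [NormedSpace ℝ Y]
    (G : X →L[ℝ] X) (hGinj : Function.Injective G)
    (κs : ℝ) (hκs : 0 < κs)
    (hpos : ∀ β : ℝ, 0 < β →
      Function.Bijective (G + β • ContinuousLinearMap.id ℝ X) ∧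
      ∀ x : X, ‖x‖ ≤ κs / β * ‖(G + β • ContinuousLinearMap.id ℝ X) x‖)
    (F : X → Y) (DF : Set X) (hDFclosed : IsClosed DF) (hFcont : ContinuousOn F DF)
    (D : Set X) (hD : D = DF ∩ Set.range G) (hDne : D.Nonempty)
    (udag : X) (hudag : udag ∈ interior DF) (fdag : Y) (hFudag : F udag = fdag)
    (ca cb c0 c1 : ℝ) (hca : 0 < ca) (hcacb : ca ≤ cb) (hc0 : 0 < c0) (hc1 : 0 < c1)
    (hfwd : ∀ u ∈ D, ‖G (u - udag)‖ ≤ c0 → ‖F u - fdag‖ ≤ cb * ‖G (u - udag)‖)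
    (hinv : ∀ u ∈ D, ‖F u - fdag‖ ≤ c1 → ca * ‖G (u - udag)‖ ≤ ‖F u - fdag‖)
    (r : ℝ) (hr : 0 < r) (ubar : X) (hubar : ubar ∈ Set.range G)
    (T : ℝ → Y → X → ℝ)
    (hT : ∀ (α : ℝ) (fδ : Y), ∀ u ∈ D, ∀ v : X, G v = u - ubar →
      T α fδ u = ‖F u - fδ‖ ^ r + α * ‖v‖ ^ r)
    (hHolder : udag - ubar ∈ Set.range G) :
    ∃ α₀ > 0, ∃ δ₀ > 0, ∃ C > 0, ∃ K₁ > 0,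
      ∀ α ∈ Set.Ioc (0:ℝ) α₀, ∀ δ ∈ Set.Ioc (0:ℝ) δ₀,
      ∀ fδ : Y, ‖fδ - fdag‖ ≤ δ →
      ∀ u ∈ D, (∀ u' ∈ D, T α fδ u ≤ T α fδ u') →
        ‖u - udag‖ ≤ C * α ^ (1 / (2 * r)) + K₁ * δ / α ^ (1 / (2 * r)) := by
  obtain ⟨w, hw⟩ := hHolder
  obtain ⟨b, hb⟩ := hubar
  set W := ‖w‖ with hWdef
  have hW0 : 0 ≤ W := norm_nonneg w
  set M := (2:ℝ) ^ (1/r) with hMdef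
  have hM : (0:ℝ) < M := Real.rpow_pos_of_pos two_pos _
  have hr' : r ≠ 0 := hr.ne'
  set m := min 1 (c1 / (2 * M * (W + 1))) with hmdef
  have hm0 : 0 < m := lt_min one_pos (by positivity)
  have hm1 : m ≤ 1 := min_le_left _ _
  clear_value W M m
  refine ⟨m ^ r, Real.rpow_pos_of_pos hm0 r, c1 / (2 * (M + 1)), by positivity,
    κs * M * W / ca + (1 + κs) * (M + 1) * W + 1, by positivity,
    κs * (M + 1) / ca + (1 + κs) * M, by positivity, ?_⟩
  intro α hα δ hδ fδ hfδ u hu hmin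
  obtain ⟨hα0, hα1⟩ := hα
  obtain ⟨hδ0, hδ1⟩ := hδ
  -- udag ∈ D
  have hudagD : udag ∈ D := by
    rw [hD]
    exact ⟨interior_subset hudag, ⟨w + b, by rw [map_add, hw, hb]; abel⟩⟩
  -- preimage of u - ubar
  have huG : u ∈ Set.range G := (hD ▸ hu).2
  obtain ⟨a, ha⟩ := huG
  have hv : G (a - b) = u - ubar := by rw [map_sub, ha, hb]
  set v := a - b with hvdef
  clear_value v
  -- minimality inequality
  have hTu := hT α fδ u hu v hv
  have hTudag := hT α fδ udag hudagD w hw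
  have hminu := hmin udag hudagD
  rw [hTu, hTudag, hFudag] at hminu
  rw [← hWdef] at hminu
  have hdr : ‖fdag - fδ‖ ^ r ≤ δ ^ r :=
    Real.rpow_le_rpow (norm_nonneg _) (by rw [norm_sub_rev]; exact hfδ) hr.le
  set E := ‖F u - fδ‖ with hEdef
  have hE0 : 0 ≤ E := norm_nonneg _
  clear_value E
  have hv0 : 0 ≤ ‖v‖ := norm_nonneg _
  have hkey : E ^ r + α * ‖v‖ ^ r ≤ δ ^ r + α * W ^ r := by
    calc E ^ r + α * ‖v‖ ^ r ≤ ‖fdag - fδ‖ ^ r + α * W ^ r := hminu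
      _ ≤ δ ^ r + α * W ^ r := by linarith
  -- s := α^(1/(2r))
  set s := α ^ (1 / (2 * r)) with hsdef
  have hs0 : 0 < s := by rw [hsdef]; exact Real.rpow_pos_of_pos hα0 _
  clear_value s
  have hss : α ^ (1/r) = s * s := by
    rw [hsdef, ← Real.rpow_add hα0]
    congr 1
    field_simp
    ring
  have hαr : (α ^ (1/r)) ^ r = α := by
    rw [← Real.rpow_mul hα0.le, one_div_mul_cancel hr', Real.rpow_one]
  -- bound on E
  have hEr : E ^ r ≤ δ ^ r + (s * s * W) ^ r := by
    have h1 : (s * s * W) ^ r = α * W ^ r := by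
      rw [← hss, Real.mul_rpow (by positivity) hW0, hαr]
    have h2 : 0 ≤ α * ‖v‖ ^ r := by positivity
    rw [h1]; linarith
  have hEbd : E ≤ M * (δ + s * s * W) := by
    rw [hMdef]; exact rpow_sum_le hr hδ0.le (by positivity) hEr
  -- bound on ‖v‖
  have hvr : ‖v‖ ^ r ≤ (δ / (s * s)) ^ r + W ^ r := by
    have h1 : (δ / (s * s)) ^ r = δ ^ r / α := by
      rw [← hss, Real.div_rpow hδ0.le (by positivity), hαr]
    have h2 : α * ‖v‖ ^ r ≤ δ ^ r + α * W ^ r := by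
      have : 0 ≤ E ^ r := Real.rpow_nonneg hE0 r
      linarith
    rw [h1, div_add' _ _ _ hα0.ne', le_div_iff₀ hα0]
    nlinarith [h2]
  have hvbd : ‖v‖ ≤ M * (δ / (s * s) + W) := by
    rw [hMdef]; exact rpow_sum_le hr (by positivity) hW0 hvr
  -- smallness: α^(1/r) ≤ m
  have hsm : s * s ≤ m := by
    rw [← hss]
    calc α ^ (1/r) ≤ (m ^ r) ^ (1/r) :=
          Real.rpow_le_rpow hα0.le hα1 (by positivity)
      _ = m := by rw [one_div, Real.rpow_rpow_inv hm0.le hr']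
  -- ‖F u - fdag‖ ≤ c1
  have hsmall : ‖F u - fdag‖ ≤ c1 := by
    have h1 : ‖F u - fdag‖ ≤ E + δ := by
      calc ‖F u - fdag‖ = ‖(F u - fδ) + (fδ - fdag)‖ := by congr 1; abel
        _ ≤ E + ‖fδ - fdag‖ := by rw [hEdef]; exact norm_add_le _ _
        _ ≤ E + δ := by linarith
    have hm2 : m * (2 * M * (W + 1)) ≤ c1 := by
      have := min_le_right (1:ℝ) (c1 / (2 * M * (W + 1)))
      rw [← hmdef] at this
      exact (le_div_iff₀ (by positivity)).mp this
    have h2 : M * (s * s) * W ≤ c1 / 2 := by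
      have ha1 : M * W * (s * s) ≤ M * W * m :=
        mul_le_mul_of_nonneg_left hsm (by positivity)
      have ha2 : (0:ℝ) ≤ M * m := by positivity
      linarith [hm2]
    have h3 : (M + 1) * δ ≤ c1 / 2 := by
      have hb1 : (M + 1) * δ ≤ (M + 1) * (c1 / (2 * (M + 1))) :=
        mul_le_mul_of_nonneg_left hδ1 (by positivity)
      calc (M + 1) * δ ≤ (M + 1) * (c1 / (2 * (M + 1))) := hb1
        _ = c1 / 2 := by field_simp
    linarith
  have hGbd : ca * ‖G (u - udag)‖ ≤ E + δ := by
    have h1 := hinv u hu hsmall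
    have h2 : ‖F u - fdag‖ ≤ E + δ := by
      calc ‖F u - fdag‖ = ‖(F u - fδ) + (fδ - fdag)‖ := by congr 1; abel
        _ ≤ E + ‖fδ - fdag‖ := by rw [hEdef]; exact norm_add_le _ _
        _ ≤ E + δ := by linarith
    linarith
  -- x := v - w, G x = u - udag
  have hGxeq : G (v - w) = u - udag := by
    rw [map_sub, hv, hw]; abel
  have hxbd : ‖v - w‖ ≤ M * (δ / (s * s) + W) + W := by
    calc ‖v - w‖ ≤ ‖v‖ + W := by rw [hWdef]; exact norm_sub_le _ _
      _ ≤ M * (δ / (s * s) + W) + W := by linarith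
  have hGG : ‖G (u - udag)‖ ≤ (M * (δ + s * s * W) + δ) / ca := by
    rw [le_div_iff₀ hca, mul_comm]
    linarith [hGbd, hEbd]
  have hinterp := interp_aux G κs hpos s hs0 (v - w)
  rw [hGxeq] at hinterp
  have hfinal : ‖u - udag‖ ≤
      κs / s * ((M * (δ + s * s * W) + δ) / ca) +
      s * (1 + κs) * (M * (δ / (s * s) + W) + W) := by
    calc ‖u - udag‖ ≤ κs / s * ‖G (u - udag)‖ + s * (1 + κs) * ‖v - w‖ := hinterp
      _ ≤ κs / s * ((M * (δ + s * s * W) + δ) / ca) +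
          s * (1 + κs) * (M * (δ / (s * s) + W) + W) := by
        refine add_le_add (mul_le_mul_of_nonneg_left hGG (by positivity))
          (mul_le_mul_of_nonneg_left hxbd (by positivity))
  have halg : κs / s * ((M * (δ + s * s * W) + δ) / ca) +
      s * (1 + κs) * (M * (δ / (s * s) + W) + W) =
      (κs * M * W / ca + (1 + κs) * (M + 1) * W) * s +
      (κs * (M + 1) / ca + (1 + κs) * M) * δ / s := by
    field_simp
    ring
  rw [halg] at hfinal
  have hlast : (κs * M * W / ca + (1 + κs) * (M + 1) * W) * s ≤
      (κs * M * W / ca + (1 + κs) * (M + 1) * W + 1) * s := by nlinarith [hs0.le]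
  linarith
end

section
/- Convergence without explicit smoothness: assume u† ∈ closure(range(G)) and let α : (0, δ̄] → (0,∞) be an a priori parameter choice satisfying α(δ) → 0 and δ/α(δ)^{1/(2r)} → 0 as δ → 0. Then for every ε > 0 there exists δ₀ > 0 such that for all δ ∈ (0, δ₀], all data f^δ with ‖f^δ − f†‖ ≤ δ, and every minimizer u of T_{α(δ)}^δ over D, it holds that ‖u − u†‖ ≤ ε; i.e., the regularized solutions converge in the norm of X to u† as δ → 0. -/
open Filter Set Topology

set_option maxHeartbeats 1600000 in
/-- Theorem 3.2(a) specialized (degree `a = 1`, `κ = 1/(2r)`): convergence without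
explicit smoothness under an a priori parameter choice with `α(δ) → 0` and
`δ/α(δ)^{1/(2r)} → 0` as `δ → 0`. -/
theorem convergence_no_smoothness
    {X Y : Type*} [NormedAddCommGroup X] [NormedSpace ℝ X] [CompleteSpace X]
    [NormedAddCommGroup Y] [NormedSpace ℝ Y]
    (G : X →L[ℝ] X) (hGinj : Function.Injective G)
    (κs : ℝ) (hκs : 0 < κs)
    (hpos : ∀ β : ℝ, 0 < β →
      Function.Bijective (G + β • ContinuousLinearMap.id ℝ X) ∧
      ∀ x : X, ‖x‖ ≤ κs / β * ‖(G + β • ContinuousLinearMap.id ℝ X) x‖)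
    (F : X → Y) (DF : Set X) (hDFclosed : IsClosed DF) (hFcont : ContinuousOn F DF)
    (D : Set X) (hD : D = DF ∩ Set.range G) (hDne : D.Nonempty)
    (udag : X) (hudag : udag ∈ interior DF) (fdag : Y) (hFudag : F udag = fdag)
    (ca cb c0 c1 : ℝ) (hca : 0 < ca) (hcacb : ca ≤ cb) (hc0 : 0 < c0) (hc1 : 0 < c1)
    (hfwd : ∀ u ∈ D, ‖G (u - udag)‖ ≤ c0 → ‖F u - fdag‖ ≤ cb * ‖G (u - udag)‖)
    (hinv : ∀ u ∈ D, ‖F u - fdag‖ ≤ c1 → ca * ‖G (u - udag)‖ ≤ ‖F u - fdag‖)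
    (r : ℝ) (hr : 0 < r) (ubar : X) (hubar : ubar ∈ Set.range G)
    (T : ℝ → Y → X → ℝ)
    (hT : ∀ (α : ℝ) (fδ : Y), ∀ u ∈ D, ∀ v : X, G v = u - ubar →
      T α fδ u = ‖F u - fδ‖ ^ r + α * ‖v‖ ^ r)
    -- no explicit smoothness:
    (hsmooth : udag ∈ closure (Set.range G))
    -- the a priori parameter choice on `(0, δ̄]`:
    (δbar : ℝ) (hδbar : 0 < δbar)
    (αf : ℝ → ℝ) (hαpos : ∀ δ ∈ Set.Ioc (0:ℝ) δbar, 0 < αf δ)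
    (hα0 : Tendsto αf (𝓝[>] (0:ℝ)) (𝓝 0))
    (hquot : Tendsto (fun δ : ℝ => δ / (αf δ) ^ (1 / (2 * r))) (𝓝[>] (0:ℝ)) (𝓝 0)) :
    ∀ ε : ℝ, 0 < ε → ∃ δ₀ : ℝ, 0 < δ₀ ∧ δ₀ ≤ δbar ∧
      ∀ δ ∈ Set.Ioc (0:ℝ) δ₀, ∀ fδ : Y, ‖fδ - fdag‖ ≤ δ →
      ∀ u ∈ D, (∀ u' ∈ D, T (αf δ) fδ u ≤ T (αf δ) fδ u') →
        ‖u - udag‖ ≤ ε := by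
  classical
  intro ε hε
  have hrne : r ≠ 0 := ne_of_gt hr
  have hepos : 0 < 1 / (2 * r) := by positivity
  obtain ⟨zbar, hzbar⟩ := hubar
  set x : X := udag - ubar with hxdef
  -- the solution operator for `(G + β I) s = y`
  have sol : ∀ β : ℝ, 0 < β → ∀ y : X, ∃ s : X, G s + β • s = y ∧ ‖s‖ ≤ κs / β * ‖y‖ := by
    intro β hβ y
    obtain ⟨s, hs⟩ := (hpos β hβ).1.2 y
    have hs' : G s + β • s = y := by
      simpa [ContinuousLinearMap.add_apply, ContinuousLinearMap.smul_apply,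
        ContinuousLinearMap.id_apply] using hs
    refine ⟨s, hs', ?_⟩
    have := (hpos β hβ).2 s
    simpa [ContinuousLinearMap.add_apply, ContinuousLinearMap.smul_apply,
      ContinuousLinearMap.id_apply, hs'] using this
  choose! sl hsl hsln using sol
  -- uniqueness of solutions
  have huniq : ∀ β : ℝ, 0 < β → ∀ a c : X, G a + β • a = G c + β • c → a = c := by
    intro β hβ a c h
    have h2 := (hpos β hβ).2 (a - c)
    have h3 : (G + β • ContinuousLinearMap.id ℝ X) (a - c) = 0 := by
      simp only [ContinuousLinearMap.add_apply, ContinuousLinearMap.smul_apply,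
        ContinuousLinearMap.id_apply, map_sub, smul_sub]
      rw [h, sub_self]
    rw [h3, norm_zero, mul_zero] at h2
    have : a - c = 0 := norm_le_zero_iff.mp h2
    exact sub_eq_zero.mp this
  -- the distance function ρ
  set ρ : ℝ → ℝ := fun β => β * ‖sl β x‖ with hρdef
  have hρnonneg : ∀ β : ℝ, 0 ≤ β → 0 ≤ ρ β := fun β hβ => mul_nonneg hβ (norm_nonneg _)
  -- Lemma: ρ(β) → 0 as β → 0⁺  (uses `hsmooth`)
  have hρ0 : Tendsto ρ (𝓝[>] (0:ℝ)) (𝓝 0) := by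
    rw [Metric.tendsto_nhdsWithin_nhds]
    intro ε' hε'
    -- approximate x by an element of range G
    have hx_cl : ∃ z : X, ‖x - G z‖ < ε' / (2 * (κs + 1)) := by
      have hpos' : 0 < ε' / (2 * (κs + 1)) := by positivity
      obtain ⟨w', hw', hdist⟩ := Metric.mem_closure_iff.mp hsmooth _ hpos'
      obtain ⟨a, ha⟩ := hw'
      refine ⟨a - zbar, ?_⟩
      have : x - G (a - zbar) = udag - w' := by
        simp only [hxdef, map_sub, ha, hzbar]; abel
      rw [this, ← dist_eq_norm]
      exact hdist
    obtain ⟨z, hz⟩ := hx_cl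
    refine ⟨ε' / (2 * (1 + κs) * (‖z‖ + 1)), by positivity, ?_⟩
    intro β hβmem hβdist
    have hβ : 0 < β := hβmem
    have hβlt : β < ε' / (2 * (1 + κs) * (‖z‖ + 1)) := by
      rwa [Real.dist_eq, sub_zero, abs_of_pos hβ] at hβdist
    -- decompose the solution for x
    set s₁ : X := sl β (x - G z) with hs₁def
    set t' : X := sl β z with ht'def
    have hsol1 : G s₁ + β • s₁ = x - G z := hsl β hβ (x - G z)
    have hsolt : G t' + β • t' = z := hsl β hβ z
    have hsol2 : G (z - β • t') + β • (z - β • t') = G z := by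
      have e1 : G (z - β • t') + β • (z - β • t') = (G z + β • z) - β • (G t' + β • t') := by
        simp only [map_sub, map_smul]; module
      rw [e1, hsolt]; module
    have hsum : G (s₁ + (z - β • t')) + β • (s₁ + (z - β • t')) = x := by
      have e2 : G (s₁ + (z - β • t')) + β • (s₁ + (z - β • t'))
          = (G s₁ + β • s₁) + (G (z - β • t') + β • (z - β • t')) := by
        simp only [map_add]; module
      rw [e2, hsol1, hsol2]; abel
    have heq : sl β x = s₁ + (z - β • t') := by
      apply huniq β hβ
      rw [hsl β hβ x, hsum]
    have hb1 : β * ‖s₁‖ ≤ κs * ‖x - G z‖ := by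
      have := hsln β hβ (x - G z)
      calc β * ‖s₁‖ ≤ β * (κs / β * ‖x - G z‖) := by
            exact mul_le_mul_of_nonneg_left this hβ.le
        _ = κs * ‖x - G z‖ := by field_simp [hβ.ne']
    have hb2 : ‖z - β • t'‖ ≤ (1 + κs) * ‖z‖ := by
      have h1 : ‖β • t'‖ = β * ‖t'‖ := by rw [norm_smul, Real.norm_eq_abs, abs_of_pos hβ]
      have h2 : β * ‖t'‖ ≤ κs * ‖z‖ := by
        have := hsln β hβ z
        calc β * ‖t'‖ ≤ β * (κs / β * ‖z‖) := mul_le_mul_of_nonneg_left this hβ.le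
          _ = κs * ‖z‖ := by field_simp [hβ.ne']
      calc ‖z - β • t'‖ ≤ ‖z‖ + ‖β • t'‖ := norm_sub_le _ _
        _ ≤ ‖z‖ + κs * ‖z‖ := by rw [h1]; linarith
        _ = (1 + κs) * ‖z‖ := by ring
    have hfinal : ρ β ≤ κs * ‖x - G z‖ + β * ((1 + κs) * ‖z‖) := by
      have : ρ β = β * ‖s₁ + (z - β • t')‖ := by rw [hρdef]; simp only [heq]
      rw [this]
      calc β * ‖s₁ + (z - β • t')‖ ≤ β * (‖s₁‖ + ‖z - β • t'‖) :=
            mul_le_mul_of_nonneg_left (norm_add_le _ _) hβ.le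
        _ = β * ‖s₁‖ + β * ‖z - β • t'‖ := by ring
        _ ≤ κs * ‖x - G z‖ + β * ((1 + κs) * ‖z‖) := by
            refine add_le_add hb1 (mul_le_mul_of_nonneg_left hb2 hβ.le)
    have hterm1 : κs * ‖x - G z‖ < ε' / 2 := by
      have : κs * ‖x - G z‖ < κs * (ε' / (2 * (κs + 1))) :=
        mul_lt_mul_of_pos_left hz hκs
      have h2 : κs * (ε' / (2 * (κs + 1))) ≤ ε' / 2 := by
        rw [← mul_div_assoc, div_le_div_iff₀ (by positivity) (by norm_num)]
        nlinarith [hε', hκs]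
      linarith
    have hterm2 : β * ((1 + κs) * ‖z‖) ≤ ε' / 2 := by
      have h1 : β * ((1 + κs) * (‖z‖ + 1)) ≤ ε' / 2 := by
        have := mul_lt_mul_of_pos_right hβlt (show (0:ℝ) < (1 + κs) * (‖z‖ + 1) by positivity)
        have heq2 : ε' / (2 * (1 + κs) * (‖z‖ + 1)) * ((1 + κs) * (‖z‖ + 1)) = ε' / 2 := by
          field_simp
        linarith
      have h2 : β * ((1 + κs) * ‖z‖) ≤ β * ((1 + κs) * (‖z‖ + 1)) := by
        apply mul_le_mul_of_nonneg_left _ hβ.le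
        apply mul_le_mul_of_nonneg_left _ (by positivity)
        linarith
      linarith
    rw [Real.dist_eq, sub_zero, abs_of_nonneg (hρnonneg β hβ.le)]
    calc ρ β ≤ κs * ‖x - G z‖ + β * ((1 + κs) * ‖z‖) := hfinal
      _ < ε' / 2 + ε' / 2 := by
          apply add_lt_add_of_lt_of_le hterm1 hterm2
      _ = ε' := by ring
  -- the function b(δ) = α(δ)^(1/(2r))
  set bf : ℝ → ℝ := fun δ => (αf δ) ^ (1 / (2 * r)) with hbfdef
  have hIoc : ∀ᶠ δ in 𝓝[>] (0:ℝ), δ ∈ Set.Ioc (0:ℝ) δbar := by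
    have : Set.Ioc (0:ℝ) δbar ∈ 𝓝[>] (0:ℝ) := Ioc_mem_nhdsGT_of_mem ⟨le_refl 0, hδbar⟩
    exact this
  have hbfpos : ∀ᶠ δ in 𝓝[>] (0:ℝ), 0 < bf δ :=
    hIoc.mono fun δ h => Real.rpow_pos_of_pos (hαpos δ h) _
  have hαfIn : Tendsto αf (𝓝[>] (0:ℝ)) (𝓝[>] (0:ℝ)) :=
    tendsto_nhdsWithin_iff.mpr ⟨hα0, hIoc.mono fun δ h => hαpos δ h⟩
  have hpowcont : Tendsto (fun a : ℝ => a ^ (1 / (2 * r))) (𝓝[>] (0:ℝ)) (𝓝 0) := by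
    have hcont : ContinuousAt (fun a : ℝ => a ^ (1 / (2 * r))) 0 :=
      Real.continuousAt_rpow_const 0 _ (Or.inr hepos.le)
    have h0 : (0:ℝ) ^ (1 / (2 * r)) = 0 := Real.zero_rpow (ne_of_gt hepos)
    have := hcont.tendsto
    rw [h0] at this
    exact this.mono_left nhdsWithin_le_nhds
  have hbf0 : Tendsto bf (𝓝[>] (0:ℝ)) (𝓝 0) := hpowcont.comp hαfIn
  have hbfIn : Tendsto bf (𝓝[>] (0:ℝ)) (𝓝[>] (0:ℝ)) :=
    tendsto_nhdsWithin_iff.mpr ⟨hbf0, hbfpos⟩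
  have hρb : Tendsto (fun δ => ρ (bf δ)) (𝓝[>] (0:ℝ)) (𝓝 0) := hρ0.comp hbfIn
  -- constants
  set nx : ℝ := ‖x‖ with hnxdef
  set K : ℝ := cb * ((1 + κs) * nx) with hKdef
  have hKnonneg : 0 ≤ K := by
    have hcb : 0 < cb := lt_of_lt_of_le hca hcacb
    have : 0 ≤ nx := norm_nonneg _
    positivity
  set c2r : ℝ := (2:ℝ) ^ (1 / r) with hc2rdef
  have hc2rpos : 0 < c2r := Real.rpow_pos_of_pos (by norm_num) _
  set C₁ : ℝ := (κs / ca + 1 + κs) * c2r with hC₁def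
  have hC₁pos : 0 < C₁ := by
    have : 0 < κs / ca := div_pos hκs hca
    positivity
  set C₂ : ℝ := κs / ca with hC₂def
  have hC₂pos : 0 < C₂ := div_pos hκs hca
  set θ : ℝ := min 1 (ε / (4 * C₁ * (K + 1))) with hθdef
  have hθpos : 0 < θ := lt_min one_pos (by positivity)
  have hθ1 : θ ≤ 1 := min_le_left _ _
  -- radius for interior
  obtain ⟨rad, hradpos, hrad⟩ : ∃ rad > 0, Metric.ball udag rad ⊆ DF := by
    have h1 : DF ∈ 𝓝 udag := mem_interior_iff_mem_nhds.mp hudag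
    obtain ⟨rad, hradpos, hball⟩ := Metric.mem_nhds_iff.mp h1
    exact ⟨rad, hradpos, hball⟩
  -- tendsto for scaled argument
  have hbθIn : Tendsto (fun δ => bf δ * θ) (𝓝[>] (0:ℝ)) (𝓝[>] (0:ℝ)) := by
    refine tendsto_nhdsWithin_iff.mpr ⟨?_, hbfpos.mono fun δ h => mul_pos h hθpos⟩
    have h := hbf0.mul_const θ
    rw [zero_mul] at h
    exact h
  have hρbθ : Tendsto (fun δ => ρ (bf δ * θ)) (𝓝[>] (0:ℝ)) (𝓝 0) := hρ0.comp hbθIn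
  -- all eventual conditions
  have hev : ∀ᶠ δ in 𝓝[>] (0:ℝ),
      δ ∈ Set.Ioc (0:ℝ) δbar ∧
      δ / (αf δ) ^ (1 / (2 * r)) ≤ min 1 (ε / (4 * (C₁ + C₂ + 1))) ∧
      ρ (bf δ * θ) ≤ min θ (θ * ε / (4 * (C₁ + 1))) ∧
      ρ (bf δ) ≤ ε / 4 ∧
      ρ (bf δ * θ) < rad ∧
      bf δ ≤ c0 / ((1 + κs) * (nx + 1)) ∧
      bf δ ≤ c1 / (c2r * (K + 2) + 1) := by
    have e1 : ∀ᶠ δ in 𝓝[>] (0:ℝ), δ / (αf δ) ^ (1 / (2 * r)) < min 1 (ε / (4 * (C₁ + C₂ + 1))) :=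
      hquot.eventually_lt_const (lt_min one_pos (by positivity))
    have e2 : ∀ᶠ δ in 𝓝[>] (0:ℝ), ρ (bf δ * θ) < min θ (θ * ε / (4 * (C₁ + 1))) :=
      hρbθ.eventually_lt_const (lt_min hθpos (by positivity))
    have e3 : ∀ᶠ δ in 𝓝[>] (0:ℝ), ρ (bf δ) < ε / 4 :=
      hρb.eventually_lt_const (by positivity)
    have e4 : ∀ᶠ δ in 𝓝[>] (0:ℝ), ρ (bf δ * θ) < rad :=
      hρbθ.eventually_lt_const hradpos
    have e5 : ∀ᶠ δ in 𝓝[>] (0:ℝ), bf δ < c0 / ((1 + κs) * (nx + 1)) :=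
      hbf0.eventually_lt_const (by positivity)
    have e6 : ∀ᶠ δ in 𝓝[>] (0:ℝ), bf δ < c1 / (c2r * (K + 2) + 1) :=
      hbf0.eventually_lt_const (by positivity)
    filter_upwards [hIoc, e1, e2, e3, e4, e5, e6] with δ h0 h1 h2 h3 h4 h5 h6
    exact ⟨h0, h1.le, h2.le, h3.le, h4, h5.le, h6.le⟩
  -- extract a concrete δ₀
  obtain ⟨η, hηpos, hη⟩ := Metric.mem_nhdsWithin_iff.mp hev
  refine ⟨min (η / 2) δbar, lt_min (by positivity) hδbar, min_le_right _ _, ?_⟩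
  intro δ hδ fδ hfδ u huD hmin
  have hδpos : 0 < δ := hδ.1
  have hδη : δ < η := lt_of_le_of_lt (le_trans hδ.2 (min_le_left _ _)) (by linarith only [hηpos])
  have hPδ := hη ⟨by rw [Metric.mem_ball, Real.dist_eq, sub_zero, abs_of_pos hδpos]; exact hδη,
    hδpos⟩
  obtain ⟨hδbar', ht0, hρ₀0, hρb0, hρrad, hbc0, hbc1⟩ := hPδ
  -- notation for this δ
  have hα : 0 < αf δ := hαpos δ hδbar'
  set b : ℝ := bf δ with hbdef
  have hb : 0 < b := Real.rpow_pos_of_pos hα _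
  set t : ℝ := δ / b with htdef
  have htpos : 0 < t := div_pos hδpos hb
  have ht1 : t ≤ 1 := le_trans ht0 (min_le_left _ _)
  have htε : t ≤ ε / (4 * (C₁ + C₂ + 1)) := le_trans ht0 (min_le_right _ _)
  set β₀ : ℝ := b * θ with hβ₀def
  have hβ₀ : 0 < β₀ := mul_pos hb hθpos
  set p₀ : X := sl β₀ x with hp₀def
  set M : ℝ := ‖p₀‖ with hMdef
  have hMnonneg : 0 ≤ M := norm_nonneg _
  have hρ₀eq : ρ β₀ = β₀ * M := rfl
  set ρ₀ : ℝ := ρ β₀ with hρ₀def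
  have hρ₀nonneg : 0 ≤ ρ₀ := hρnonneg β₀ hβ₀.le
  have hρ₀θ : ρ₀ ≤ θ := le_trans hρ₀0 (min_le_left _ _)
  have hρ₀ε : ρ₀ ≤ θ * ε / (4 * (C₁ + 1)) := le_trans hρ₀0 (min_le_right _ _)
  -- basic facts about p₀
  have hsolp₀ : G p₀ + β₀ • p₀ = x := hsl β₀ hβ₀ x
  have hMbound : M ≤ κs / β₀ * nx := hsln β₀ hβ₀ x
  have hρ₀κ : ρ₀ ≤ κs * nx := by
    rw [hρ₀eq]
    calc β₀ * M ≤ β₀ * (κs / β₀ * nx) := mul_le_mul_of_nonneg_left hMbound hβ₀.le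
      _ = κs * nx := by field_simp [hβ₀.ne']
  have hGp₀ : G p₀ = x - β₀ • p₀ := by rw [← hsolp₀]; abel
  have hGp₀norm : ‖G p₀‖ ≤ (1 + κs) * nx := by
    rw [hGp₀]
    calc ‖x - β₀ • p₀‖ ≤ ‖x‖ + ‖β₀ • p₀‖ := norm_sub_le _ _
      _ = nx + β₀ * M := by
          rw [norm_smul, Real.norm_eq_abs, abs_of_pos hβ₀, hnxdef, hMdef]
      _ = nx + ρ₀ := by rw [hρ₀eq]
      _ ≤ nx + κs * nx := by linarith only [hρ₀κ]
      _ = (1 + κs) * nx := by ring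
  -- the comparison element w
  set w : X := ubar + G p₀ with hwdef
  have hwrange : w ∈ Set.range G := ⟨zbar + p₀, by rw [map_add, hzbar]⟩
  have hwudag : w - udag = -(β₀ • p₀) := by
    rw [hwdef, hGp₀, hxdef]; abel
  have hwnorm : ‖w - udag‖ = ρ₀ := by
    rw [hwudag, norm_neg, norm_smul, Real.norm_eq_abs, abs_of_pos hβ₀, hρ₀eq]
  have hwDF : w ∈ DF := by
    apply hrad
    rw [Metric.mem_ball, dist_eq_norm, hwnorm]
    exact hρrad
  have hwD : w ∈ D := by rw [hD]; exact ⟨hwDF, hwrange⟩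
  -- forward estimate for w
  have hGwu : ‖G (w - udag)‖ ≤ β₀ * ((1 + κs) * nx) := by
    rw [hwudag, map_neg, map_smul, norm_neg, norm_smul, Real.norm_eq_abs, abs_of_pos hβ₀]
    exact mul_le_mul_of_nonneg_left hGp₀norm hβ₀.le
  have hGwuc0 : ‖G (w - udag)‖ ≤ c0 := by
    have h1 : β₀ * ((1 + κs) * nx) ≤ b * ((1 + κs) * (nx + 1)) := by
      rw [hβ₀def]
      have h2 : b * θ ≤ b := by
        calc b * θ ≤ b * 1 := mul_le_mul_of_nonneg_left hθ1 hb.le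
          _ = b := mul_one b
      have h3 : (1 + κs) * nx ≤ (1 + κs) * (nx + 1) := by
        apply mul_le_mul_of_nonneg_left (by linarith) (by positivity)
      have hAnn : (0:ℝ) ≤ (1 + κs) * nx := by
        have : (0:ℝ) ≤ nx := norm_nonneg _
        positivity
      calc b * θ * ((1 + κs) * nx) ≤ b * ((1 + κs) * nx) :=
            mul_le_mul_of_nonneg_right h2 hAnn
        _ ≤ b * ((1 + κs) * (nx + 1)) := mul_le_mul_of_nonneg_left h3 hb.le
    have h4 : b * ((1 + κs) * (nx + 1)) ≤ c0 := by
      have hden : 0 < (1 + κs) * (nx + 1) := by positivity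
      calc b * ((1 + κs) * (nx + 1)) ≤ (c0 / ((1 + κs) * (nx + 1))) * ((1 + κs) * (nx + 1)) :=
            mul_le_mul_of_nonneg_right hbc0 hden.le
        _ = c0 := div_mul_cancel₀ _ hden.ne'
    exact le_trans hGwu (le_trans h1 h4)
  have hFw : ‖F w - fdag‖ ≤ K * θ * b := by
    calc ‖F w - fdag‖ ≤ cb * ‖G (w - udag)‖ := hfwd w hwD hGwuc0
      _ ≤ cb * (β₀ * ((1 + κs) * nx)) := by
          apply mul_le_mul_of_nonneg_left hGwu (le_trans hca.le hcacb)
      _ = K * θ * b := by rw [hKdef, hβ₀def]; ring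
  -- W and S bounds
  set W : ℝ := K * θ + t + ρ₀ / θ with hWdef
  have hWnonneg : 0 ≤ W := by
    rw [hWdef]
    have h1 : 0 ≤ K * θ := mul_nonneg hKnonneg hθpos.le
    have h2 : 0 ≤ ρ₀ / θ := div_nonneg hρ₀nonneg hθpos.le
    linarith only [h1, h2, htpos.le]
  set Sb : ℝ := b * W with hSbdef
  have hSbnonneg : 0 ≤ Sb := mul_nonneg hb.le hWnonneg
  have hδtb : δ = t * b := by rw [htdef, div_mul_cancel₀ _ (ne_of_gt hb)]
  have hE : ‖F w - fδ‖ ≤ Sb := by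
    have h1 : ‖F w - fδ‖ ≤ ‖F w - fdag‖ + ‖fdag - fδ‖ := by
      rw [show F w - fδ = (F w - fdag) + (fdag - fδ) by abel]
      exact norm_add_le _ _
    have h2 : ‖fdag - fδ‖ ≤ δ := by rwa [norm_sub_rev]
    have h3 : 0 ≤ ρ₀ / θ * b := mul_nonneg (div_nonneg hρ₀nonneg hθpos.le) hb.le
    calc ‖F w - fδ‖ ≤ K * θ * b + δ := by linarith only [hFw, h1, h2]
      _ = K * θ * b + t * b := by rw [← hδtb]
      _ ≤ Sb := by rw [hSbdef, hWdef]; linarith only [h3]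
  -- the preimage of u - ubar
  have huD' : u ∈ DF ∩ Set.range G := hD ▸ huD
  obtain ⟨a, ha⟩ := huD'.2
  set vu : X := a - zbar with hvudef
  have hvu : G vu = u - ubar := by rw [hvudef, map_sub, ha, hzbar]
  -- minimality
  have hwubar : G p₀ = w - ubar := by rw [hwdef]; abel
  have hTu : T (αf δ) fδ u = ‖F u - fδ‖ ^ r + (αf δ) * ‖vu‖ ^ r := hT (αf δ) fδ u huD vu hvu
  have hTw : T (αf δ) fδ w = ‖F w - fδ‖ ^ r + (αf δ) * M ^ r := hT (αf δ) fδ w hwD p₀ hwubar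
  have hmin' : ‖F u - fδ‖ ^ r + (αf δ) * ‖vu‖ ^ r ≤ ‖F w - fδ‖ ^ r + (αf δ) * M ^ r := by
    rw [← hTu, ← hTw]; exact hmin w hwD
  -- rpow arithmetic
  have hbrbr : b ^ r * b ^ r = αf δ := by
    rw [hbdef, hbfdef]
    rw [← Real.rpow_mul hα.le, ← Real.rpow_add hα]
    rw [show 1 / (2 * r) * r + 1 / (2 * r) * r = 1 by field_simp; ring, Real.rpow_one]
  have hbb : (b * b) ^ r = αf δ := by rw [Real.mul_rpow hb.le hb.le, hbrbr]
  have hαMr : (αf δ) * M ^ r ≤ Sb ^ r := by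
    have h1 : (αf δ) * M ^ r = ((b * b) * M) ^ r := by
      rw [Real.mul_rpow (by positivity) hMnonneg, hbb]
    have h2 : (b * b) * M = b * (ρ₀ / θ) := by
      rw [hρ₀eq, hβ₀def]; field_simp
    have h3 : b * (ρ₀ / θ) ≤ Sb := by
      rw [hSbdef, hWdef]
      have h4 : 0 ≤ K * θ + t := by positivity
      linarith only [mul_nonneg hb.le h4]
    rw [h1, h2]
    exact Real.rpow_le_rpow (by positivity) h3 hr.le
  have hEr : ‖F w - fδ‖ ^ r ≤ Sb ^ r := Real.rpow_le_rpow (norm_nonneg _) hE hr.le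
  have hXr2 : ‖F u - fδ‖ ^ r ≤ 2 * Sb ^ r := by
    have h1 : 0 ≤ (αf δ) * ‖vu‖ ^ r :=
      mul_nonneg hα.le (Real.rpow_nonneg (norm_nonneg _) _)
    linarith only [hmin', hαMr, hEr, h1]
  have hvr2 : (αf δ) * ‖vu‖ ^ r ≤ 2 * Sb ^ r := by
    have h1 : 0 ≤ ‖F u - fδ‖ ^ r := Real.rpow_nonneg (norm_nonneg _) _
    linarith only [hmin', hαMr, hEr, h1]
  -- key comparison lemma for rpow
  have key : ∀ c d : ℝ, 0 ≤ c → 0 ≤ d → c ^ r ≤ d ^ r → c ≤ d := by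
    intro c d hc hd h
    by_contra hlt
    push_neg at hlt
    exact absurd h (not_le.mpr (Real.rpow_lt_rpow hd hlt hr))
  have hc2rr : c2r ^ r = 2 := by
    rw [hc2rdef, ← Real.rpow_mul (by norm_num : (0:ℝ) ≤ 2),
      one_div_mul_cancel hrne, Real.rpow_one]
  -- X ≤ c2r * Sb
  have hX : ‖F u - fδ‖ ≤ c2r * Sb := by
    apply key _ _ (norm_nonneg _) (by positivity)
    rw [Real.mul_rpow hc2rpos.le hSbnonneg, hc2rr]
    exact hXr2
  -- ‖vu‖ ≤ c2r * W / b
  have hvu_bound : ‖vu‖ ≤ c2r * W / b := by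
    apply key _ _ (norm_nonneg _) (by positivity)
    have hRHS : (c2r * W / b) ^ r = 2 * W ^ r / b ^ r := by
      rw [Real.div_rpow (by positivity) hb.le, Real.mul_rpow hc2rpos.le hWnonneg, hc2rr]
    rw [hRHS]
    have hSbr : Sb ^ r = b ^ r * W ^ r := by
      rw [hSbdef, Real.mul_rpow hb.le hWnonneg]
    have hbrpos : 0 < b ^ r := Real.rpow_pos_of_pos hb _
    rw [le_div_iff₀ hbrpos]
    -- goal: ‖vu‖ ^ r * b ^ r ≤ 2 * W ^ r
    have h5 : b ^ r * (b ^ r * ‖vu‖ ^ r) ≤ b ^ r * (2 * W ^ r) := by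
      have h5' : b ^ r * b ^ r * ‖vu‖ ^ r ≤ 2 * (b ^ r * W ^ r) := by
        rw [hbrbr]; rw [hSbr] at hvr2; linarith
      linarith only [h5']
    have h6 := le_of_mul_le_mul_left h5 hbrpos
    linarith only [h6]
  -- ‖F u - fdag‖ bound
  have hFufdag : ‖F u - fdag‖ ≤ b * (c2r * W + t) := by
    have h1 : ‖F u - fdag‖ ≤ ‖F u - fδ‖ + ‖fδ - fdag‖ := by
      rw [show F u - fdag = (F u - fδ) + (fδ - fdag) by abel]
      exact norm_add_le _ _
    calc ‖F u - fdag‖ ≤ c2r * Sb + δ := by linarith only [hX, h1, hfδ]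
      _ = c2r * (b * W) + t * b := by rw [hSbdef, ← hδtb]
      _ = b * (c2r * W + t) := by ring
  -- applicability of the inverse estimate
  have hWK2 : W ≤ K + 2 := by
    rw [hWdef]
    have h1 : K * θ ≤ K := by
      calc K * θ ≤ K * 1 := mul_le_mul_of_nonneg_left hθ1 hKnonneg
        _ = K := mul_one K
    have h2 : ρ₀ / θ ≤ 1 := by
      rw [div_le_one hθpos]; exact hρ₀θ
    have h3 : 0 ≤ t := htpos.le
    linarith only [h1, h2, h3, ht1]
  have hc1app : ‖F u - fdag‖ ≤ c1 := by
    have h1 : b * (c2r * W + t) ≤ b * (c2r * (K + 2) + 1) := by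
      apply mul_le_mul_of_nonneg_left _ hb.le
      have h1' := mul_le_mul_of_nonneg_left hWK2 hc2rpos.le
      linarith only [h1', ht1]
    have h2 : b * (c2r * (K + 2) + 1) ≤ c1 := by
      have hden : 0 < c2r * (K + 2) + 1 := by positivity
      calc b * (c2r * (K + 2) + 1) ≤ (c1 / (c2r * (K + 2) + 1)) * (c2r * (K + 2) + 1) :=
            mul_le_mul_of_nonneg_right hbc1 hden.le
        _ = c1 := by field_simp
    linarith only [hFufdag, h1, h2]
  have hGd : ‖G (u - udag)‖ ≤ b * (c2r * W + t) / ca := by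
    have h1 := hinv u huD hc1app
    rw [le_div_iff₀ hca]
    calc ‖G (u - udag)‖ * ca = ca * ‖G (u - udag)‖ := mul_comm _ _
      _ ≤ ‖F u - fdag‖ := h1
      _ ≤ b * (c2r * W + t) := hFufdag
  -- final interpolation step
  set q : X := sl b vu with hqdef
  set pb : X := sl b x with hpbdef
  have hsolq : G q + b • q = vu := hsl b hb vu
  have hsolpb : G pb + b • pb = x := hsl b hb x
  set s : X := vu - b • q - pb with hsdef
  have hdecomp : G s + b • s = u - udag := by
    have h1 : G s + b • s = (G vu + b • vu) - b • (G q + b • q) - (G pb + b • pb) := by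
      rw [hsdef]
      simp only [map_sub, map_smul]
      module
    rw [h1, hsolq, hsolpb, hvu, hxdef]
    abel
  have hGs : ‖G s‖ ≤ κs / b * ‖G (u - udag)‖ := by
    have h1 := (hpos b hb).2 (G s)
    have h2 : (G + b • ContinuousLinearMap.id ℝ X) (G s) = G (u - udag) := by
      simp only [ContinuousLinearMap.add_apply, ContinuousLinearMap.smul_apply,
        ContinuousLinearMap.id_apply]
      rw [← hdecomp, map_add, map_smul]
    rwa [h2] at h1
  have hqb : ‖q‖ ≤ κs / b * ‖vu‖ := hsln b hb vu
  have hpbρ : b * ‖pb‖ = ρ b := rfl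
  clear_value b t θ W Sb ρ₀ M K c2r C₁ C₂ vu p₀ q pb s w β₀ nx
  have hfinal : ‖u - udag‖ ≤ κs / b * ‖G (u - udag)‖ + b * (‖vu‖ + b * ‖q‖ + ‖pb‖) := by
    have hnorm_eq : ‖u - udag‖ = ‖G s + b • s‖ := by rw [hdecomp]
    rw [hnorm_eq]
    calc ‖G s + b • s‖ ≤ ‖G s‖ + ‖b • s‖ := norm_add_le _ _
      _ = ‖G s‖ + b * ‖s‖ := by rw [norm_smul, Real.norm_eq_abs, abs_of_pos hb]
      _ ≤ κs / b * ‖G (u - udag)‖ + b * ‖s‖ := by linarith only [hGs]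
      _ ≤ κs / b * ‖G (u - udag)‖ + b * (‖vu‖ + b * ‖q‖ + ‖pb‖) := by
          have hs_bound : ‖s‖ ≤ ‖vu‖ + b * ‖q‖ + ‖pb‖ := by
            rw [hsdef]
            calc ‖vu - b • q - pb‖ ≤ ‖vu - b • q‖ + ‖pb‖ := norm_sub_le _ _
              _ ≤ ‖vu‖ + ‖b • q‖ + ‖pb‖ := by linarith only [norm_sub_le vu (b • q)]
              _ = ‖vu‖ + b * ‖q‖ + ‖pb‖ := by
                  rw [norm_smul, Real.norm_eq_abs, abs_of_pos hb]
          exact add_le_add (le_refl _) (mul_le_mul_of_nonneg_left hs_bound hb.le)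
  -- assemble the numeric bound
  have hterm1 : κs / b * ‖G (u - udag)‖ ≤ C₂ * (c2r * W + t) := by
    calc κs / b * ‖G (u - udag)‖ ≤ κs / b * (b * (c2r * W + t) / ca) := by
          apply mul_le_mul_of_nonneg_left hGd (by positivity)
      _ = C₂ * (c2r * W + t) := by rw [hC₂def]; field_simp; try ring
  have hterm2 : b * ‖vu‖ ≤ c2r * W := by
    calc b * ‖vu‖ ≤ b * (c2r * W / b) := mul_le_mul_of_nonneg_left hvu_bound hb.le
      _ = c2r * W := by field_simp [hb.ne']
  have hterm3 : b * (b * ‖q‖) ≤ κs * (c2r * W) := by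
    calc b * (b * ‖q‖) ≤ b * (b * (κs / b * ‖vu‖)) := by
          apply mul_le_mul_of_nonneg_left _ hb.le
          exact mul_le_mul_of_nonneg_left hqb hb.le
      _ = κs * (b * ‖vu‖) := by field_simp [hb.ne']
      _ ≤ κs * (c2r * W) := mul_le_mul_of_nonneg_left hterm2 hκs.le
  have hterm4 : b * ‖pb‖ ≤ ε / 4 := by rw [hpbρ]; exact hρb0
  have hmain : ‖u - udag‖ ≤ C₁ * W + C₂ * t + ε / 4 := by
    have h1 : b * (‖vu‖ + b * ‖q‖ + ‖pb‖) = b * ‖vu‖ + b * (b * ‖q‖) + b * ‖pb‖ := by ring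
    have h2 : κs / b * ‖G (u - udag)‖ + b * (‖vu‖ + b * ‖q‖ + ‖pb‖)
        ≤ C₂ * (c2r * W + t) + (c2r * W + κs * (c2r * W) + ε / 4) := by
      rw [h1]; linarith only [hterm1, hterm2, hterm3, hterm4]
    have h3 : C₂ * (c2r * W + t) + (c2r * W + κs * (c2r * W) + ε / 4)
        = C₁ * W + C₂ * t + ε / 4 := by
      rw [hC₁def, hC₂def]; ring
    linarith only [hfinal, h2, h3.le, h3.ge]
  -- final numeric estimate
  have hWsplit : C₁ * W = C₁ * (K * θ) + C₁ * t + C₁ * (ρ₀ / θ) := by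
    rw [hWdef]; ring
  have hb1 : C₁ * (K * θ) ≤ ε / 4 := by
    have hθle : θ ≤ ε / (4 * C₁ * (K + 1)) := by rw [hθdef]; exact min_le_right _ _
    have h1 : C₁ * (K * θ) ≤ C₁ * ((K + 1) * θ) := by
      apply mul_le_mul_of_nonneg_left _ hC₁pos.le
      apply mul_le_mul_of_nonneg_right (by linarith) hθpos.le
    have h2 : C₁ * ((K + 1) * θ) ≤ C₁ * ((K + 1) * (ε / (4 * C₁ * (K + 1)))) := by
      apply mul_le_mul_of_nonneg_left _ hC₁pos.le
      apply mul_le_mul_of_nonneg_left hθle (by linarith)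
    have h3 : C₁ * ((K + 1) * (ε / (4 * C₁ * (K + 1)))) = ε / 4 := by
      have hK1 : K + 1 ≠ 0 := by positivity
      field_simp
    linarith only [h1, h2, h3.le, h3.ge]
  have hb2 : C₁ * t + C₂ * t ≤ ε / 4 := by
    have h1 : (C₁ + C₂) * t ≤ (C₁ + C₂) * (ε / (4 * (C₁ + C₂ + 1))) := by
      apply mul_le_mul_of_nonneg_left htε (by positivity)
    have h2 : (C₁ + C₂) * (ε / (4 * (C₁ + C₂ + 1))) ≤ ε / 4 := by
      rw [← mul_div_assoc, div_le_div_iff₀ (by positivity) (by norm_num)]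
      linarith only [hε]
    linarith only [h1, h2]
  have hb3 : C₁ * (ρ₀ / θ) ≤ ε / 4 := by
    have h1 : ρ₀ / θ ≤ ε / (4 * (C₁ + 1)) := by
      rw [div_le_iff₀ hθpos]
      calc ρ₀ ≤ θ * ε / (4 * (C₁ + 1)) := hρ₀ε
        _ = ε / (4 * (C₁ + 1)) * θ := by ring
    have h2 : C₁ * (ρ₀ / θ) ≤ C₁ * (ε / (4 * (C₁ + 1))) :=
      mul_le_mul_of_nonneg_left h1 hC₁pos.le
    have h3 : C₁ * (ε / (4 * (C₁ + 1))) ≤ ε / 4 := by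
      rw [← mul_div_assoc, div_le_div_iff₀ (by positivity) (by norm_num)]
      linarith only [hε]
    linarith only [h2, h3]
  linarith only [hmain, hWsplit.le, hWsplit.ge, hb1, hb2, hb3]
end

section
/- Hölder convergence rate for an a priori parameter choice: assume u† − ū ∈ range(G) and let the parameter choice satisfy k₁ δ^r ≤ α(δ) ≤ k₂ δ^r for constants 0 < k₁ ≤ k₂ (this is α(δ) ∼ δ^{1/(κ(p+a))} with κ = 1/(2r), p = a = 1). Then there exist δ₀ > 0 and a finite constant K > 0 such that for all δ ∈ (0, δ₀], all data f^δ with ‖f^δ − f†‖ ≤ δ, and every minimizer u of T_{α(δ)}^δ over D, one has ‖u − u†‖ ≤ K δ^{1/2}. -/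
open Filter Set Topology

set_option maxHeartbeats 1000000 in
/-- Theorem 3.2(b) specialized (Hölder smoothness `p = 1`, degree `a = 1`,
`κ = 1/(2r)`): rate `‖u_{α(δ)}^δ − u†‖ = O(δ^{1/2})` under the a priori choice
`α(δ) ∼ δ^r`. -/
theorem holder_rate_apriori
    {X Y : Type*} [NormedAddCommGroup X] [NormedSpace ℝ X] [CompleteSpace X]
    [NormedAddCommGroup Y] [NormedSpace ℝ Y]
    (G : X →L[ℝ] X) (hGinj : Function.Injective G)
    (κs : ℝ) (hκs : 0 < κs)
    (hpos : ∀ β : ℝ, 0 < β →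
      Function.Bijective (G + β • ContinuousLinearMap.id ℝ X) ∧
      ∀ x : X, ‖x‖ ≤ κs / β * ‖(G + β • ContinuousLinearMap.id ℝ X) x‖)
    (F : X → Y) (DF : Set X) (hDFclosed : IsClosed DF) (hFcont : ContinuousOn F DF)
    (D : Set X) (hD : D = DF ∩ Set.range G) (hDne : D.Nonempty)
    (udag : X) (hudag : udag ∈ interior DF) (fdag : Y) (hFudag : F udag = fdag)
    (ca cb c0 c1 : ℝ) (hca : 0 < ca) (hcacb : ca ≤ cb) (hc0 : 0 < c0) (hc1 : 0 < c1)
    (hfwd : ∀ u ∈ D, ‖G (u - udag)‖ ≤ c0 → ‖F u - fdag‖ ≤ cb * ‖G (u - udag)‖)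
    (hinv : ∀ u ∈ D, ‖F u - fdag‖ ≤ c1 → ca * ‖G (u - udag)‖ ≤ ‖F u - fdag‖)
    (r : ℝ) (hr : 0 < r) (ubar : X) (hubar : ubar ∈ Set.range G)
    (T : ℝ → Y → X → ℝ)
    (hT : ∀ (α : ℝ) (fδ : Y), ∀ u ∈ D, ∀ v : X, G v = u - ubar →
      T α fδ u = ‖F u - fδ‖ ^ r + α * ‖v‖ ^ r)
    -- Hölder smoothness:
    (hHolder : udag - ubar ∈ Set.range G)
    -- the a priori parameter choice `α(δ) ∼ δ^r`:
    (k₁ k₂ : ℝ) (hk₁ : 0 < k₁) (hk₁k₂ : k₁ ≤ k₂)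
    (αf : ℝ → ℝ)
    (hα : ∀ δ : ℝ, 0 < δ → k₁ * δ ^ r ≤ αf δ ∧ αf δ ≤ k₂ * δ ^ r) :
    ∃ δ₀ > 0, ∃ K > 0, ∀ δ ∈ Set.Ioc (0:ℝ) δ₀, ∀ fδ : Y, ‖fδ - fdag‖ ≤ δ →
      ∀ u ∈ D, (∀ u' ∈ D, T (αf δ) fδ u ≤ T (αf δ) fδ u') →
        ‖u - udag‖ ≤ K * δ ^ ((1:ℝ) / 2) := by
  classical
  obtain ⟨w, hw⟩ := hHolder
  obtain ⟨s₀, hs₀⟩ := hubar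
  have hudagD : udag ∈ D := by
    rw [hD]
    refine ⟨interior_subset hudag, ⟨s₀ + w, ?_⟩⟩
    rw [map_add, hs₀, hw]; abel
  have hk₂ : 0 < k₂ := lt_of_lt_of_le hk₁ hk₁k₂
  have hwr : (0:ℝ) ≤ ‖w‖ ^ r := Real.rpow_nonneg (norm_nonneg w) r
  set C : ℝ := (1 + k₂ * ‖w‖ ^ r) ^ ((1:ℝ)/r) with hCdef
  have hC1 : (1:ℝ) ≤ C := by
    apply Real.one_le_rpow (by nlinarith [mul_nonneg hk₂.le hwr]) (by positivity)
  set M : ℝ := (1/k₁ + ‖w‖ ^ r) ^ ((1:ℝ)/r) with hMdef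
  have hM0 : (0:ℝ) ≤ M := Real.rpow_nonneg (by positivity) _
  set R : ℝ := M + ‖w‖ with hRdef
  have hR0 : (0:ℝ) ≤ R := add_nonneg hM0 (norm_nonneg w)
  set K : ℝ := κs * (C + 1) / ca + (κs + 1) * R with hKdef
  have hK : 0 < K := by
    have h1 : 0 < κs * (C + 1) / ca := div_pos (mul_pos hκs (by linarith)) hca
    have h2 : 0 ≤ (κs + 1) * R := mul_nonneg (by linarith) hR0
    rw [hKdef]; linarith
  refine ⟨c1 / (C + 1), div_pos hc1 (by linarith), K, hK, ?_⟩
  rintro δ ⟨hδ, hδ₀⟩ fδ hfδ u huD hmin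
  obtain ⟨hα₁, hα₂⟩ := hα δ hδ
  have hδr : 0 < δ ^ r := Real.rpow_pos_of_pos hδ r
  have hαpos : 0 < αf δ := lt_of_lt_of_le (by positivity) hα₁
  obtain ⟨v', hv'⟩ := (hD ▸ huD).2
  have hv : G (v' - s₀) = u - ubar := by rw [map_sub, hv', hs₀]
  set v : X := v' - s₀ with hvdef
  have hmin' := hmin udag hudagD
  rw [hT (αf δ) fδ u huD v hv, hT (αf δ) fδ udag hudagD w (by rw [hw])] at hmin'
  have hFud : ‖F udag - fδ‖ ≤ δ := by rw [hFudag, norm_sub_rev]; exact hfδ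
  have key : ‖F u - fδ‖ ^ r + αf δ * ‖v‖ ^ r ≤ δ ^ r + αf δ * ‖w‖ ^ r := by
    refine hmin'.trans ?_
    have : ‖F udag - fδ‖ ^ r ≤ δ ^ r :=
      Real.rpow_le_rpow (norm_nonneg _) hFud hr.le
    linarith
  have hvr : (0:ℝ) ≤ ‖v‖ ^ r := Real.rpow_nonneg (norm_nonneg v) r
  have hFr : (0:ℝ) ≤ ‖F u - fδ‖ ^ r := Real.rpow_nonneg (norm_nonneg _) r
  -- bound on ‖F u - fδ‖
  have h1 : ‖F u - fδ‖ ≤ C * δ := by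
    have hstep : ‖F u - fδ‖ ^ r ≤ (1 + k₂ * ‖w‖ ^ r) * δ ^ r := by
      have : αf δ * ‖w‖ ^ r ≤ k₂ * δ ^ r * ‖w‖ ^ r :=
        mul_le_mul_of_nonneg_right hα₂ hwr
      nlinarith
    have h' := Real.rpow_le_rpow hFr hstep (by positivity : (0:ℝ) ≤ 1/r)
    rwa [one_div, Real.rpow_rpow_inv (norm_nonneg _) hr.ne',
      Real.mul_rpow (by nlinarith [mul_nonneg hk₂.le hwr]) hδr.le, Real.rpow_rpow_inv hδ.le hr.ne',
      ← one_div, ← hCdef] at h'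
  -- bound on ‖v‖
  have h2 : ‖v‖ ≤ M := by
    have h5 : δ ^ r ≤ αf δ / k₁ := by rw [le_div_iff₀ hk₁]; linarith
    have h7 : αf δ * ‖v‖ ^ r ≤ αf δ * (1/k₁ + ‖w‖ ^ r) := by
      have he : αf δ * (1/k₁ + ‖w‖ ^ r) = αf δ / k₁ + αf δ * ‖w‖ ^ r := by ring
      rw [he]; linarith
    have h8 : ‖v‖ ^ r ≤ 1/k₁ + ‖w‖ ^ r := le_of_mul_le_mul_left h7 hαpos
    have h' := Real.rpow_le_rpow hvr h8 (by positivity : (0:ℝ) ≤ 1/r)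
    rwa [one_div, Real.rpow_rpow_inv (norm_nonneg _) hr.ne', ← one_div, ← hMdef] at h'
  -- inverse nonlinearity condition applies
  have hFdag : ‖F u - fdag‖ ≤ (C + 1) * δ := by
    calc ‖F u - fdag‖ = ‖(F u - fδ) + (fδ - fdag)‖ := by abel_nf
      _ ≤ ‖F u - fδ‖ + ‖fδ - fdag‖ := norm_add_le _ _
      _ ≤ C * δ + δ := add_le_add h1 hfδ
      _ = (C + 1) * δ := by ring
  have hc1' : (C + 1) * δ ≤ c1 := by
    rw [← le_div_iff₀' (by linarith : (0:ℝ) < C + 1)]; exact hδ₀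
  have hGu := hinv u huD (hFdag.trans hc1')
  have hGbound : ‖G (u - udag)‖ ≤ (C + 1) * δ / ca := by
    rw [le_div_iff₀ hca]; nlinarith
  -- interpolation with β = δ^(1/2)
  have hy : G (v - w) = u - udag := by rw [map_sub, hv, hw]; abel
  have hyn : ‖v - w‖ ≤ R := (norm_sub_le _ _).trans (add_le_add_left h2 _)
  set s : ℝ := δ ^ ((1:ℝ)/2) with hsdef
  have hs : 0 < s := Real.rpow_pos_of_pos hδ _
  have hss : s * s = δ := by
    rw [hsdef, ← Real.rpow_add hδ]; norm_num
  obtain ⟨-, hb⟩ := hpos s hs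
  have hkey := hb (G (v - w) - s • (v - w))
  have hid : (G + s • ContinuousLinearMap.id ℝ X) (G (v - w) - s • (v - w))
      = G (G (v - w)) - (s * s) • (v - w) := by
    simp [ContinuousLinearMap.add_apply, map_sub, map_smul, smul_sub, smul_smul]
    abel
  rw [hid] at hkey
  have hGGy : ‖G (G (v - w))‖ ≤ (C + 1) * δ / ca := by rw [hy]; exact hGbound
  have hnorm2 : ‖G (G (v - w)) - (s * s) • (v - w)‖
      ≤ (C + 1) * δ / ca + (s * s) * R := by
    calc ‖G (G (v - w)) - (s * s) • (v - w)‖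
        ≤ ‖G (G (v - w))‖ + ‖(s * s) • (v - w)‖ := norm_sub_le _ _
      _ ≤ (C + 1) * δ / ca + (s * s) * R := by
          rw [norm_smul, Real.norm_eq_abs, abs_of_pos (mul_pos hs hs)]
          exact add_le_add hGGy (mul_le_mul_of_nonneg_left hyn (mul_pos hs hs).le)
  have hfin : ‖u - udag‖ ≤ κs / s * ((C + 1) * δ / ca + (s * s) * R) + s * R := by
    calc ‖u - udag‖ = ‖G (v - w)‖ := by rw [hy]
      _ ≤ ‖G (v - w) - s • (v - w)‖ + ‖s • (v - w)‖ := by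
          have := norm_add_le (G (v - w) - s • (v - w)) (s • (v - w))
          simpa using this
      _ ≤ κs / s * ((C + 1) * δ / ca + (s * s) * R) + s * R := by
          refine add_le_add (hkey.trans ?_) ?_
          · exact mul_le_mul_of_nonneg_left hnorm2 (by positivity)
          · rw [norm_smul, Real.norm_eq_abs, abs_of_pos hs]
            exact mul_le_mul_of_nonneg_left hyn hs.le
  have heq : κs / s * ((C + 1) * (s * s) / ca + (s * s) * R) + s * R = K * s := by
    rw [hKdef]; field_simp; ring
  calc ‖u - udag‖ ≤ κs / s * ((C + 1) * δ / ca + (s * s) * R) + s * R := hfin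
    _ = K * s := by rw [← hss] at *; rw [← heq]
    _ = K * δ ^ ((1:ℝ)/2) := rfl
end

section
/- Inverse nonlinearity estimate for the exponential Volterra operator: let u† ∈ L^∞(0,1) and set c₁ := exp(−‖Gu†‖_∞). Then for every ε ∈ (0, c₁) and every u ∈ L^∞(0,1) with ‖F(u) − F(u†)‖_∞ ≤ c₁ − ε, one has ε ‖G(u − u†)‖_∞ ≤ ‖F(u) − F(u†)‖_∞. -/
open MeasureTheory Set
open scoped ENNReal NNReal

private lemma Lp_top_ae_le' {α : Type*} [MeasurableSpace α] {μ : Measure α} (f : Lp ℝ ⊤ μ) :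
    ∀ᵐ x ∂μ, |(f : α → ℝ) x| ≤ ‖f‖ := by
  have h := ae_le_eLpNormEssSup (μ := μ) (f := (f : α → ℝ))
  have hlt : eLpNormEssSup (f : α → ℝ) μ < ⊤ := by
    have := Lp.eLpNorm_lt_top f
    rwa [eLpNorm_exponent_top] at this
  filter_upwards [h] with x hx
  have h2 : ((‖(f : α → ℝ) x‖₊ : ℝ≥0∞)).toReal ≤ (eLpNormEssSup (f : α → ℝ) μ).toReal :=
    ENNReal.toReal_mono hlt.ne hx
  simpa [Lp.norm_def, eLpNorm_exponent_top, Real.norm_eq_abs] using h2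

private lemma key_ineq' {ε c₁ d : ℝ} (hε : 0 < ε) (hεc : ε ≤ c₁) (h : ε ≤ c₁ * Real.exp d) :
    ε * |d| ≤ c₁ * |Real.exp d - 1| := by
  rcases le_or_gt 0 d with hd | hd
  · have h1 : d + 1 ≤ Real.exp d := Real.add_one_le_exp d
    rw [abs_of_nonneg hd, abs_of_nonneg (by linarith)]
    nlinarith
  · have h1 : (-d) + 1 ≤ Real.exp (-d) := Real.add_one_le_exp (-d)
    have h2 : Real.exp (-d) * Real.exp d = 1 := by
      rw [← Real.exp_add]; simp
    have h3 : Real.exp d < 1 := by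
      rw [← Real.exp_zero]; exact Real.exp_lt_exp.2 hd
    have h4 : 0 < Real.exp d := Real.exp_pos d
    rw [abs_of_neg hd, abs_of_neg (by linarith)]
    nlinarith [mul_pos (mul_pos hε (neg_pos.2 hd)) h4]

/-- Inverse nonlinearity estimate for the exponential Volterra operator on `L^∞(0,1)`:
with `c₁ = exp(−‖Gu†‖_∞)`, for `ε ∈ (0,c₁)` and `‖F(u) − F(u†)‖_∞ ≤ c₁ − ε` one has
`ε‖G(u − u†)‖_∞ ≤ ‖F(u) − F(u†)‖_∞`. -/
theorem exp_volterra_inverse_estimate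
    (μ : Measure ℝ) (hμ : μ = volume.restrict (Set.Ioo 0 1))
    (G : Lp ℝ ⊤ μ →L[ℝ] Lp ℝ ⊤ μ)
    (hG : ∀ u : Lp ℝ ⊤ μ, (G u : ℝ → ℝ) =ᵐ[μ] fun x => ∫ ξ in Set.Ioc (0:ℝ) x, u ξ ∂μ)
    (F : Lp ℝ ⊤ μ → Lp ℝ ⊤ μ)
    (hF : ∀ u : Lp ℝ ⊤ μ, (F u : ℝ → ℝ) =ᵐ[μ] fun x => Real.exp ((G u : ℝ → ℝ) x))
    (udag : Lp ℝ ⊤ μ) (c₁ : ℝ) (hc₁ : c₁ = Real.exp (-‖G udag‖)) :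
    ∀ ε ∈ Set.Ioo (0:ℝ) c₁, ∀ u : Lp ℝ ⊤ μ, ‖F u - F udag‖ ≤ c₁ - ε →
      ε * ‖G (u - udag)‖ ≤ ‖F u - F udag‖ := by
  haveI : IsFiniteMeasure μ := by
    rw [hμ]
    constructor
    rw [Measure.restrict_apply_univ]
    simp [Real.volume_Ioo]
  intro ε hε u hle
  obtain ⟨hε0, hεc⟩ := hε
  set M := ‖F u - F udag‖ with hM
  have hM0 : 0 ≤ M := norm_nonneg _
  have hGe : G (u - udag) = G u - G udag := map_sub G u udag
  have hGsub : (G (u - udag) : ℝ → ℝ) =ᵐ[μ]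
      fun x => (G u : ℝ → ℝ) x - (G udag : ℝ → ℝ) x := by
    rw [hGe]; exact Lp.coeFn_sub (G u) (G udag)
  have hFsub : ((F u - F udag : Lp ℝ ⊤ μ) : ℝ → ℝ) =ᵐ[μ]
      fun x => (F u : ℝ → ℝ) x - (F udag : ℝ → ℝ) x := Lp.coeFn_sub (F u) (F udag)
  have hbd : ∀ᵐ x ∂μ, |(G udag : ℝ → ℝ) x| ≤ ‖G udag‖ := Lp_top_ae_le' (G udag)
  have hfM : ∀ᵐ x ∂μ, |((F u - F udag : Lp ℝ ⊤ μ) : ℝ → ℝ) x| ≤ M :=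
    Lp_top_ae_le' (F u - F udag)
  have hbound : ∀ᵐ x ∂μ, ‖(G (u - udag) : ℝ → ℝ) x‖ ≤ M / ε := by
    filter_upwards [hGsub, hFsub, hbd, hfM, hF u, hF udag] with x h1 h2 h3 h4 h5 h6
    set b := (G udag : ℝ → ℝ) x
    set a := (G u : ℝ → ℝ) x
    have hdiff : |Real.exp a - Real.exp b| ≤ M := by
      rw [h2, h5, h6] at h4; exact h4
    have hexpb : c₁ ≤ Real.exp b := by
      rw [hc₁]
      exact Real.exp_le_exp.2 (by have := (abs_le.1 h3).1; linarith)
    set d := a - b with hd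
    have hsplit : Real.exp a - Real.exp b = Real.exp b * (Real.exp d - 1) := by
      rw [hd, Real.exp_sub]
      field_simp
    have hc₁pos : 0 < c₁ := hc₁ ▸ Real.exp_pos _
    have hexpd : 0 < Real.exp d := Real.exp_pos d
    have hkey1 : c₁ * |Real.exp d - 1| ≤ M := by
      calc c₁ * |Real.exp d - 1| ≤ Real.exp b * |Real.exp d - 1| := by
            apply mul_le_mul_of_nonneg_right hexpb (abs_nonneg _)
        _ = |Real.exp a - Real.exp b| := by rw [hsplit, abs_mul, abs_of_pos (lt_of_lt_of_le hc₁pos hexpb)]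
        _ ≤ M := hdiff
    have hεed : ε ≤ c₁ * Real.exp d := by
      have : c₁ - c₁ * Real.exp d ≤ c₁ * |Real.exp d - 1| := by
        have := le_abs_self (1 - Real.exp d)
        nlinarith [abs_nonneg (Real.exp d - 1), neg_abs_le (Real.exp d - 1)]
      linarith [hle]
    have := key_ineq' hε0 hεc.le hεed
    have hfinal : ε * |d| ≤ M := le_trans this hkey1
    rw [Real.norm_eq_abs, h1]
    rw [le_div_iff₀ hε0]
    calc |a - b| * ε = ε * |d| := by rw [hd, mul_comm]
      _ ≤ M := hfinal
  have hnorm : ‖G (u - udag)‖ ≤ M / ε := by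
    simpa using Lp.norm_le_of_ae_bound (div_nonneg hM0 hε0.le) hbound
  calc ε * ‖G (u - udag)‖ ≤ ε * (M / ε) := by
        exact mul_le_mul_of_nonneg_left hnorm hε0.le
    _ = M := by field_simp
end
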